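/- arXiv:2407.15720 — 5 statements merged into one kernel-verified Lean document; each statement's English description precedes it below -/
import Mathlib

section
/- The infimum of the loss ℓ̃(U,u) := tr(½·u²·Γ·Λ·U·Λ·Uᵀ − u·Λ²·Uᵀ) over all U ∈ ℝ^{d×d} and u ∈ ℝ equals −½·tr(Λ²·Γ⁻¹), and for every nonzero real constant c the pair (U,u) = (c·Γ⁻¹, 1/c) attains this infimum. -/
open Matrix

section Aux

variable {n : Type*} [Fintype n] [DecidableEq n]

private lemma psd_smul' {c : ℝ} {A : Matrix n n ℝ} (hc : 0 ≤ c) (hA : A.PosSemidef) :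
    (c • A).PosSemidef := by
  have ht : Aᵀ = A := by
    rw [← conjTranspose_eq_transpose_of_trivial]; exact hA.1.eq
  refine posSemidef_iff_dotProduct_mulVec.mpr ⟨?_, fun x => ?_⟩
  · simp [Matrix.IsHermitian, conjTranspose_smul, ht]
  · rw [smul_mulVec, dotProduct_smul, smul_eq_mul]
    exact mul_nonneg hc (hA.dotProduct_mulVec_nonneg x)

private lemma pd_smul' {c : ℝ} {A : Matrix n n ℝ} (hc : 0 < c) (hA : A.PosDef) :
    (c • A).PosDef := by
  have ht : Aᵀ = A := by
    rw [← conjTranspose_eq_transpose_of_trivial]; exact hA.1.eq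
  refine posDef_iff_dotProduct_mulVec.mpr ⟨?_, fun x hx => ?_⟩
  · simp [Matrix.IsHermitian, conjTranspose_smul, ht]
  · rw [smul_mulVec, dotProduct_smul, smul_eq_mul]
    exact mul_pos hc (hA.dotProduct_mulVec_pos hx)

private lemma psd_trace_nonneg' {A : Matrix n n ℝ} (hA : A.PosSemidef) : 0 ≤ A.trace := by
  rw [Matrix.trace]
  refine Finset.sum_nonneg fun i _ => ?_
  have := hA.dotProduct_mulVec_nonneg (Pi.single i 1)
  simpa [Matrix.diag, dotProduct, mulVec, Pi.single_apply, Finset.sum_ite_eq,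
    Finset.sum_ite_eq'] using this

open scoped MatrixOrder in
private lemma trace_mul_psd_nonneg' {P S : Matrix n n ℝ} (hP : P.PosSemidef)
    (hS : S.PosSemidef) : 0 ≤ (P * S).trace := by
  have h1 : (P * S).trace = (CFC.sqrt S * P * CFC.sqrt S).trace := by
    rw [← trace_mul_cycle]
    rw [Matrix.mul_assoc, CFC.sqrt_mul_sqrt_self S hS.nonneg]
  rw [h1]
  refine psd_trace_nonneg' ?_
  simpa only [(CFC.sqrt_nonneg S).posSemidef.isHermitian.eq] using hP.mul_mul_conjTranspose_same (CFC.sqrt S)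

end Aux

/-- The infimum of the loss
`ℓ̃(U,u) := tr(½·u²·Γ·Λ·U·Λ·Uᵀ − u·Λ²·Uᵀ)` over all `U ∈ ℝ^{d×d}` and `u ∈ ℝ`
equals `−½·tr(Λ²·Γ⁻¹)`, and for every nonzero real `c` the pair
`(U,u) = (c·Γ⁻¹, 1/c)` attains this infimum. -/
theorem stmt_0 (d N : ℕ) (hd : 0 < d) (hN : 0 < N)
    (Λ : Matrix (Fin d) (Fin d) ℝ) (hΛ : Λ.PosDef)
    (Γ : Matrix (Fin d) (Fin d) ℝ)
    (hΓ : Γ = (1 + 1 / (N : ℝ)) • Λ +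
      (Matrix.trace Λ / (N : ℝ)) • (1 : Matrix (Fin d) (Fin d) ℝ))
    (ℓ : Matrix (Fin d) (Fin d) ℝ → ℝ → ℝ)
    (hℓ : ∀ U u, ℓ U u =
      Matrix.trace ((u ^ 2 / 2) • (Γ * Λ * U * Λ * Uᵀ) - u • (Λ ^ 2 * Uᵀ))) :
    IsLeast (Set.range fun p : Matrix (Fin d) (Fin d) ℝ × ℝ => ℓ p.1 p.2)
      (-(1 / 2) * Matrix.trace (Λ ^ 2 * Γ⁻¹)) ∧
    ∀ c : ℝ, c ≠ 0 →
      ℓ (c • Γ⁻¹) (1 / c) = -(1 / 2) * Matrix.trace (Λ ^ 2 * Γ⁻¹) := by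
  have hΛt : Λᵀ = Λ := by
    rw [← conjTranspose_eq_transpose_of_trivial]; exact hΛ.isHermitian.eq
  have hc1 : (0:ℝ) < 1 + 1 / N := by positivity
  have hc2 : (0:ℝ) ≤ Λ.trace / N := by
    have := psd_trace_nonneg' hΛ.posSemidef
    positivity
  have hΓpd : Γ.PosDef := by
    rw [hΓ]
    exact (pd_smul' hc1 hΛ).add_posSemidef (psd_smul' hc2 .one)
  have hΓt : Γᵀ = Γ := by
    rw [← conjTranspose_eq_transpose_of_trivial]; exact hΓpd.isHermitian.eq
  have hdet : IsUnit Γ.det := hΓpd.det_pos.ne'.isUnit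
  have hGi : Γ * Γ⁻¹ = 1 := mul_nonsing_inv _ hdet
  have hiG : Γ⁻¹ * Γ = 1 := nonsing_inv_mul _ hdet
  have hIt : Γ⁻¹ᵀ = Γ⁻¹ := by rw [transpose_nonsing_inv, hΓt]
  have hcomm : Γ * Λ = Λ * Γ := by
    rw [hΓ]
    simp [Matrix.add_mul, Matrix.mul_add, smul_mul_assoc, mul_smul_comm]
  -- matrix identities used to simplify cross terms
  have h3 : ∀ X : Matrix (Fin d) (Fin d) ℝ, Γ * Λ * (Γ⁻¹ * Λ * X) = Λ ^ 2 * X := by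
    intro X
    rw [hcomm]
    simp only [Matrix.mul_assoc]
    rw [← Matrix.mul_assoc Γ Γ⁻¹, hGi, Matrix.one_mul, ← Matrix.mul_assoc, ← pow_two]
  -- trace identity for another cross term
  have h2 : ∀ V : Matrix (Fin d) (Fin d) ℝ,
      (Γ * Λ * (V * Λ * Γ⁻¹)).trace = (Λ ^ 2 * Vᵀ).trace := by
    intro V
    have e : Γ * Λ * (V * Λ * Γ⁻¹) = Γ * Λ * (V * Λ) * Γ⁻¹ := by
      simp only [Matrix.mul_assoc]
    rw [e, trace_mul_cycle, ← Matrix.mul_assoc, ← Matrix.mul_assoc, hiG, Matrix.one_mul,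
      trace_mul_comm]
    have e2 : Λ * (Λ * V) = Λ ^ 2 * V := by rw [← Matrix.mul_assoc, ← pow_two]
    rw [e2]
    calc (Λ ^ 2 * V).trace = ((Λ ^ 2 * V)ᵀ).trace := (trace_transpose _).symm
      _ = (Vᵀ * (Λ ^ 2)ᵀ).trace := by rw [transpose_mul]
      _ = (Λ ^ 2 * Vᵀ).trace := by rw [transpose_pow, hΛt, trace_mul_comm]
  -- the key expansion
  have expand : ∀ V : Matrix (Fin d) (Fin d) ℝ,
      ((Γ * Λ) * ((V - Γ⁻¹) * Λ * (V - Γ⁻¹)ᵀ)).trace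
        = (Γ * Λ * V * Λ * Vᵀ).trace - 2 * (Λ ^ 2 * Vᵀ).trace + (Λ ^ 2 * Γ⁻¹).trace := by
    intro V
    have hVt : (V - Γ⁻¹)ᵀ = Vᵀ - Γ⁻¹ := by rw [transpose_sub, hIt]
    rw [hVt]
    have step : (Γ * Λ) * ((V - Γ⁻¹) * Λ * (Vᵀ - Γ⁻¹))
        = (Γ * Λ) * (V * Λ * Vᵀ) - (Γ * Λ) * (V * Λ * Γ⁻¹)
          - ((Γ * Λ) * (Γ⁻¹ * Λ * Vᵀ) - (Γ * Λ) * (Γ⁻¹ * Λ * Γ⁻¹)) := by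
      simp only [Matrix.sub_mul, Matrix.mul_sub]
      abel
    rw [step, trace_sub, trace_sub, trace_sub, h2 V, h3 Vᵀ, h3 Γ⁻¹]
    have e : (Γ * Λ) * (V * Λ * Vᵀ) = Γ * Λ * V * Λ * Vᵀ := by
      simp only [Matrix.mul_assoc]
    rw [e]
    ring
  -- closed form of the loss
  have hl : ∀ (U : Matrix (Fin d) (Fin d) ℝ) (u : ℝ),
      ℓ U u = (1/2) * ((Γ * Λ) * ((u • U - Γ⁻¹) * Λ * (u • U - Γ⁻¹)ᵀ)).trace
        - (1/2) * (Λ ^ 2 * Γ⁻¹).trace := by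
    intro U u
    rw [hℓ, trace_sub, trace_smul, trace_smul, expand (u • U)]
    have e1 : Γ * Λ * (u • U) * Λ * (u • U)ᵀ = (u * u) • (Γ * Λ * U * Λ * Uᵀ) := by
      simp [transpose_smul, mul_smul_comm, smul_mul_assoc, smul_smul]
    have e2 : Λ ^ 2 * (u • U)ᵀ = u • (Λ ^ 2 * Uᵀ) := by
      simp [transpose_smul, mul_smul_comm]
    rw [e1, e2, trace_smul, trace_smul]
    simp only [smul_eq_mul]
    ring
  -- the attainment claim
  have hattain : ∀ c : ℝ, c ≠ 0 →
      ℓ (c • Γ⁻¹) (1 / c) = -(1 / 2) * Matrix.trace (Λ ^ 2 * Γ⁻¹) := by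
    intro c hc
    rw [hl]
    have e : (1 / c) • (c • Γ⁻¹) - Γ⁻¹ = 0 := by
      rw [smul_smul, one_div, inv_mul_cancel₀ hc, one_smul, sub_self]
    rw [e]
    simp only [Matrix.zero_mul, Matrix.mul_zero, transpose_zero, trace_zero]
    ring
  refine ⟨⟨⟨(Γ⁻¹, 1), by simpa using hattain 1 one_ne_zero⟩, ?_⟩, hattain⟩
  rintro x ⟨⟨U, u⟩, rfl⟩
  simp only
  rw [hl U u]
  have hGL : (Γ * Λ).PosSemidef := by
    have hΛΛ : (Λ * Λ).PosSemidef := by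
      simpa [conjTranspose_eq_transpose_of_trivial, hΛt] using posSemidef_conjTranspose_mul_self Λ
    have e : Γ * Λ = (1 + 1 / (N:ℝ)) • (Λ * Λ) + (Λ.trace / N) • Λ := by
      rw [hΓ]
      simp [Matrix.add_mul, smul_mul_assoc]
    rw [e]
    exact (psd_smul' hc1.le hΛΛ).add (psd_smul' hc2 hΛ.posSemidef)
  have hS : ((u • U - Γ⁻¹) * Λ * (u • U - Γ⁻¹)ᵀ).PosSemidef := by
    simpa [conjTranspose_eq_transpose_of_trivial] using
      hΛ.posSemidef.mul_mul_conjTranspose_same (u • U - Γ⁻¹)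
  have := trace_mul_psd_nonneg' hGL hS
  linarith
end

section
/- Every global minimizer (U,u) of the loss ℓ̃ over ℝ^{d×d} × ℝ satisfies u·U = Γ⁻¹. -/
open Matrix

theorem aux_lin_zero (L Q : ℝ) (h : ∀ t : ℝ, 0 ≤ t * L + t^2 * Q) : L = 0 := by
  rcases lt_or_ge 0 Q with hQ | hQ
  · have h3 := h (-L/(2*Q))
    have e : (-L/(2*Q)) * L + (-L/(2*Q))^2 * Q = -(L^2/(4*Q)) := by
      field_simp; ring
    rw [e] at h3
    have h4 : 0 ≤ L^2/(4*Q) := div_nonneg (sq_nonneg L) (by linarith)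
    have h5 : L^2/(4*Q) = 0 := le_antisymm (by linarith) h4
    field_simp at h5; exact pow_eq_zero_iff (n := 2) (by norm_num) |>.mp (by simpa using h5)
  · have h1 := h 1
    have h2 := h (-1)
    nlinarith

theorem aux_trace_zero {n : ℕ} (M : Matrix (Fin n) (Fin n) ℝ)
    (h : ∀ Δ : Matrix (Fin n) (Fin n) ℝ, Matrix.trace (M * Δᵀ) = 0) : M = 0 := by
  have h0 : Matrix.trace (M * Mᵀ) = 0 := h M
  have hs : ∑ i, ∑ j, (M i j)^2 = 0 := by
    rw [← h0]; simp [Matrix.trace, Matrix.mul_apply, Matrix.diag, sq]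
  ext i j
  have h1 := (Finset.sum_eq_zero_iff_of_nonneg
    (fun i _ => Finset.sum_nonneg (fun j _ => sq_nonneg (M i j)))).mp hs i (Finset.mem_univ i)
  have h2 := (Finset.sum_eq_zero_iff_of_nonneg
    (fun j _ => sq_nonneg (M i j))).mp h1 j (Finset.mem_univ j)
  simpa [sq] using h2

/-- Every global minimizer `(U,u)` of the loss
`ℓ̃(U,u) := tr(½·u²·Γ·Λ·U·Λ·Uᵀ − u·Λ²·Uᵀ)` over `ℝ^{d×d} × ℝ`
satisfies `u·U = Γ⁻¹`. -/
theorem stmt_2 (d N : ℕ) (hd : 0 < d) (hN : 0 < N)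
    (Λ : Matrix (Fin d) (Fin d) ℝ) (hΛ : Λ.PosDef)
    (Γ : Matrix (Fin d) (Fin d) ℝ)
    (hΓ : Γ = (1 + 1 / (N : ℝ)) • Λ +
      (Matrix.trace Λ / (N : ℝ)) • (1 : Matrix (Fin d) (Fin d) ℝ))
    (ℓ : Matrix (Fin d) (Fin d) ℝ → ℝ → ℝ)
    (hℓ : ∀ U u, ℓ U u =
      Matrix.trace ((u ^ 2 / 2) • (Γ * Λ * U * Λ * Uᵀ) - u • (Λ ^ 2 * Uᵀ))) :
    ∀ (U : Matrix (Fin d) (Fin d) ℝ) (u : ℝ),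
      (∀ (U' : Matrix (Fin d) (Fin d) ℝ) (u' : ℝ), ℓ U u ≤ ℓ U' u') →
      u • U = Γ⁻¹ := by
  intro U u hmin
  -- basic facts
  have hΛs : Λᵀ = Λ := hΛ.1
  have hΓs : Γᵀ = Γ := by
    rw [hΓ]; simp [Matrix.transpose_smul, hΛs]
  have hcomm : Γ * Λ = Λ * Γ := by
    rw [hΓ]
    simp only [Matrix.add_mul, Matrix.mul_add, Matrix.smul_mul, Matrix.mul_smul,
      Matrix.one_mul, Matrix.mul_one]
  have htr : 0 < Matrix.trace Λ := by
    rw [Matrix.trace]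
    have : Nonempty (Fin d) := Fin.pos_iff_nonempty.mp hd
    apply Finset.sum_pos
    · intro i _
      have h := hΛ.dotProduct_mulVec_pos (x := Pi.single i 1) (fun hc => by simpa using congrFun hc i)
      simpa [Matrix.mulVec_single, dotProduct, Pi.single_apply] using h
    · exact Finset.univ_nonempty
  have hΓpd : Γ.PosDef := by
    have hN' : (0:ℝ) < N := by exact_mod_cast hN
    have ha : (0:ℝ) < 1 + 1/(N:ℝ) := by positivity
    have hb : (0:ℝ) < Matrix.trace Λ / N := by positivity
    rw [hΓ]
    refine Matrix.PosDef.of_dotProduct_mulVec_pos ?_ ?_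
    · show _ = _
      simp [Matrix.conjTranspose_smul, hΛs]
    · intro x hx
      have h1 := hΛ.dotProduct_mulVec_pos hx
      have h2 : 0 < dotProduct (star x) x := by
        simpa using dotProduct_star_self_pos_iff.mpr hx
      simp only [Matrix.add_mulVec, Matrix.smul_mulVec, Matrix.one_mulVec,
        dotProduct_add, dotProduct_smul, smul_eq_mul]
      nlinarith [mul_pos ha h1, mul_pos hb h2]
  have hΓdet : IsUnit Γ.det := isUnit_iff_isUnit_det Γ |>.mp hΓpd.isUnit
  have hΛdet : IsUnit Λ.det := isUnit_iff_isUnit_det Λ |>.mp hΛ.isUnit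
  -- the reduced loss
  set V : Matrix (Fin d) (Fin d) ℝ := u • U with hV
  set F : Matrix (Fin d) (Fin d) ℝ → ℝ :=
    fun W => (1/2) * Matrix.trace (Γ*Λ*W*Λ*Wᵀ) - Matrix.trace (Λ^2*Wᵀ) with hF
  have hFV : ℓ U u = F V := by
    rw [hℓ, hF, hV]
    simp only [Matrix.trace_sub, Matrix.trace_smul, smul_eq_mul,
      Matrix.mul_smul, Matrix.smul_mul, Matrix.transpose_smul, smul_smul]
    ring
  have hFW : ∀ W, ℓ W 1 = F W := by
    intro W
    rw [hℓ, hF]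
    simp only [Matrix.trace_sub, Matrix.trace_smul, smul_eq_mul, one_smul, one_pow]
  have hkey : ∀ W, F V ≤ F W := by
    intro W
    rw [← hFV, ← hFW]
    exact hmin W 1
  -- cross-term identity
  have hcross : ∀ Δ : Matrix (Fin d) (Fin d) ℝ,
      Matrix.trace (Γ*Λ*Δ*Λ*Vᵀ) = Matrix.trace (Γ*Λ*V*Λ*Δᵀ) := by
    intro Δ
    rw [← Matrix.trace_transpose (Γ*Λ*Δ*Λ*Vᵀ)]
    simp only [Matrix.transpose_mul, Matrix.transpose_transpose, hΛs, hΓs]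
    simp only [← Matrix.mul_assoc]
    rw [Matrix.trace_mul_comm (V*Λ*Δᵀ*Λ) Γ]
    simp only [← Matrix.mul_assoc]
    rw [Matrix.trace_mul_comm (Γ*V*Λ*Δᵀ) Λ]
    simp only [← Matrix.mul_assoc]
    rw [show Λ*Γ = Γ*Λ from hcomm.symm]
  -- expansion
  have hexp : ∀ (Δ : Matrix (Fin d) (Fin d) ℝ) (t : ℝ),
      F (V + t•Δ) = F V + t * (Matrix.trace ((Γ*Λ*V*Λ - Λ^2) * Δᵀ))
        + t^2 * ((1/2) * Matrix.trace (Γ*Λ*Δ*Λ*Δᵀ)) := by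
    intro Δ t
    rw [hF]
    simp only [Matrix.transpose_add, Matrix.transpose_smul, Matrix.mul_add, Matrix.add_mul,
      Matrix.mul_smul, Matrix.smul_mul, Matrix.sub_mul, Matrix.trace_add, Matrix.trace_sub,
      Matrix.trace_smul, smul_eq_mul, smul_smul]
    rw [hcross Δ]
    ring
  -- first-order condition
  have hM0 : Γ*Λ*V*Λ - Λ^2 = 0 := by
    apply aux_trace_zero
    intro Δ
    apply aux_lin_zero _ ((1/2) * Matrix.trace (Γ*Λ*Δ*Λ*Δᵀ))
    intro t
    have := hkey (V + t•Δ)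
    rw [hexp Δ t] at this
    linarith
  have hM : Γ*Λ*V*Λ = Λ^2 := by
    have := sub_eq_zero.mp hM0
    exact this
  -- solve for V
  have h1 : Λ*V*Λ = Γ⁻¹ * Λ^2 := by
    rw [← hM, Matrix.mul_assoc Γ Λ V, Matrix.mul_assoc Γ (Λ*V) Λ,
      Matrix.nonsing_inv_mul_cancel_left Γ _ hΓdet]
  have hinvcomm : Γ⁻¹ * Λ = Λ * Γ⁻¹ := by
    have heq : Γ⁻¹ * (Γ * Λ) * Γ⁻¹ = Γ⁻¹ * (Λ * Γ) * Γ⁻¹ := by rw [hcomm]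
    have l : Γ⁻¹ * (Γ * Λ) * Γ⁻¹ = Λ * Γ⁻¹ := by
      rw [Matrix.nonsing_inv_mul_cancel_left Γ Λ hΓdet]
    have r : Γ⁻¹ * (Λ * Γ) * Γ⁻¹ = Γ⁻¹ * Λ := by
      rw [Matrix.mul_assoc Γ⁻¹ (Λ*Γ) Γ⁻¹, Matrix.mul_assoc Λ Γ Γ⁻¹,
        Matrix.mul_nonsing_inv Γ hΓdet, Matrix.mul_one]
    rw [l, r] at heq
    exact heq.symm
  have h1' : Λ * (V * Λ) = Λ * (Γ⁻¹ * Λ) := by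
    rw [← Matrix.mul_assoc, h1, sq, ← Matrix.mul_assoc Γ⁻¹ Λ Λ, hinvcomm,
      Matrix.mul_assoc, hinvcomm]
  have h2 : V * Λ = Γ⁻¹ * Λ := by
    have := congrArg (fun X => Λ⁻¹ * X) h1'
    simpa [Matrix.nonsing_inv_mul_cancel_left _ _ hΛdet] using this
  have h3 : V = Γ⁻¹ := by
    have := congrArg (fun X => X * Λ⁻¹) h2
    simpa [Matrix.mul_nonsing_inv_cancel_right _ _ hΛdet] using this
  exact h3
end

section
/- Fix r with 1 ≤ r ≤ d, and let V* = diag(v*₁,…,v*_d) where v*_i = N/((N+1)·λ_i + tr(D)) for i ≤ r and v*_i = 0 for i > r. Then for every nonzero real constant c, the pair (U,u) = (c·Q·V*·Qᵀ, 1/c) minimizes ℓ̃(U,u) over all U ∈ ℝ^{d×d} with rank(U) ≤ r and all u ∈ ℝ; that is, ℓ̃(Q·V*·Qᵀ, 1) ≤ ℓ̃(U,u) whenever rank(U) ≤ r. -/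
open Matrix Finset
open scoped RealInnerProductSpace

lemma proj_bound {d : ℕ} (X : Matrix (Fin d) (Fin d) ℝ) :
    ∃ t : Fin d → ℝ, (∀ i, 0 ≤ t i) ∧ (∀ i, t i ≤ 1) ∧ (∑ i, t i) = (X.rank : ℝ) ∧
      ∀ c : Fin d → ℝ,
        (∑ i, c i * X i i) ^ 2 ≤ (∑ i, (c i) ^ 2 * t i) * (∑ i, ∑ j, (X i j) ^ 2) := by
  classical
  set eqv := WithLp.linearEquiv 2 ℝ (Fin d → ℝ) with heqv
  set S : Submodule ℝ (EuclideanSpace ℝ (Fin d)) :=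
    Submodule.span ℝ (Set.range fun j => eqv.symm (Xᵀ j)) with hS
  have hfr : Module.finrank ℝ S = X.rank := by
    rw [Matrix.rank_eq_finrank_span_cols]
    have : S = Submodule.map (eqv.symm : (Fin d → ℝ) →ₗ[ℝ] _)
        (Submodule.span ℝ (Set.range X.col)) := by
      rw [Submodule.map_span, ← Set.range_comp]
      rfl
    rw [this, LinearEquiv.finrank_map_eq]
  let b := stdOrthonormalBasis ℝ S
  let e : Fin (Module.finrank ℝ S) → Fin d → ℝ :=
    fun m => eqv ((b m : EuclideanSpace ℝ (Fin d)))
  have horth : ∀ m n, ∑ k, e m k * e n k = if m = n then 1 else 0 := by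
    intro m n
    have h := b.orthonormal
    rw [orthonormal_iff_ite] at h
    have h2 := h m n
    rw [Submodule.coe_inner, PiLp.inner_apply] at h2
    simp only [RCLike.inner_apply, RCLike.conj_to_real] at h2
    rw [← h2]
    exact Finset.sum_congr rfl fun k _ => mul_comm _ _
  -- expansion of elements of S
  have hexp : ∀ (x : S) (i : Fin d),
      eqv (x : EuclideanSpace ℝ (Fin d)) i
        = ∑ m, (∑ k, e m k * eqv (x : EuclideanSpace ℝ (Fin d)) k) * e m i := by
    intro x i
    have h1 : (x : EuclideanSpace ℝ (Fin d))
        = ∑ m, (inner ℝ ((b m : S) : EuclideanSpace ℝ (Fin d)) ((x : EuclideanSpace ℝ (Fin d))) : ℝ)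
            • (b m : EuclideanSpace ℝ (Fin d)) := by
      conv_lhs => rw [← b.sum_repr' x]
      push_cast
      refine Finset.sum_congr rfl fun m _ => ?_
      rw [Submodule.coe_inner]
    have h2 : eqv (x : EuclideanSpace ℝ (Fin d))
        = ∑ m, (inner ℝ ((b m : S) : EuclideanSpace ℝ (Fin d)) ((x : EuclideanSpace ℝ (Fin d))) : ℝ) • e m := by
      conv_lhs => rw [h1]
      rw [map_sum]
      exact Finset.sum_congr rfl fun m _ => map_smul _ _ _
    conv_lhs => rw [h2]
    rw [Finset.sum_apply]
    refine Finset.sum_congr rfl fun m _ => ?_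
    rw [Pi.smul_apply, smul_eq_mul, PiLp.inner_apply]
    simp only [RCLike.inner_apply, RCLike.conj_to_real, starRingEnd_apply, star_trivial]
    exact congrArg (· * e m i) (Finset.sum_congr rfl fun k _ => mul_comm _ _)
  have hmem : ∀ j, eqv.symm (Xᵀ j) ∈ S := fun j => Submodule.subset_span ⟨j, rfl⟩
  have hcol : ∀ j i, X i j = ∑ m, (∑ k, e m k * X k j) * e m i := by
    intro j i
    have h := hexp ⟨eqv.symm (Xᵀ j), hmem j⟩ i
    simpa using h
  set P : Fin d → Fin d → ℝ := fun i j => ∑ m, e m i * e m j with hP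
  have hPP : ∀ i, ∑ k, P i k * P i k = P i i := by
    intro i
    calc ∑ k, P i k * P i k
        = ∑ k, ∑ m, ∑ n, (e m i * e m k) * (e n i * e n k) := by
          refine Finset.sum_congr rfl fun k _ => ?_
          rw [hP]
          exact Finset.sum_mul_sum _ _ _ _
      _ = ∑ m, ∑ n, (e m i * e n i) * ∑ k, e m k * e n k := by
          rw [Finset.sum_comm]
          refine Finset.sum_congr rfl fun m _ => ?_
          rw [Finset.sum_comm]
          refine Finset.sum_congr rfl fun n _ => ?_
          rw [Finset.mul_sum]
          exact Finset.sum_congr rfl fun k _ => by ring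
      _ = ∑ m, e m i * e m i := by
          refine Finset.sum_congr rfl fun m _ => ?_
          rw [Finset.sum_eq_single m]
          · rw [horth m m, if_pos rfl, mul_one]
          · intro n _ hn
            rw [horth m n, if_neg (Ne.symm hn), mul_zero]
          · intro h; exact absurd (Finset.mem_univ m) h
      _ = P i i := rfl
  refine ⟨fun i => P i i, ?_, ?_, ?_, ?_⟩
  · intro i
    exact Finset.sum_nonneg fun m _ => mul_self_nonneg _
  · -- P i i ≤ 1
    intro i
    have h0 : 0 ≤ P i i := Finset.sum_nonneg fun m _ => mul_self_nonneg _
    have hsq : P i i * P i i ≤ P i i := by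
      calc P i i * P i i ≤ ∑ k, P i k * P i k := by
            refine Finset.single_le_sum (f := fun k => P i k * P i k)
              (fun k _ => mul_self_nonneg _) (Finset.mem_univ i)
        _ = P i i := hPP i
    nlinarith
  · -- trace
    rw [← hfr]
    calc ∑ i, P i i = ∑ i, ∑ m, e m i * e m i := rfl
      _ = ∑ m, ∑ i, e m i * e m i := Finset.sum_comm
      _ = ∑ m : Fin (Module.finrank ℝ S), (1 : ℝ) := by
          refine Finset.sum_congr rfl fun m _ => ?_
          rw [horth m m, if_pos rfl]
      _ = (Module.finrank ℝ S : ℝ) := by simp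
  · intro c
    have hPX : ∀ i, ∑ k, P i k * X k i = X i i := by
      intro i
      calc ∑ k, (∑ m, e m i * e m k) * X k i
          = ∑ k, ∑ m, e m i * e m k * X k i := by
            refine Finset.sum_congr rfl fun k _ => ?_
            exact Finset.sum_mul _ _ _
        _ = ∑ m, ∑ k, e m i * e m k * X k i := Finset.sum_comm
        _ = ∑ m, (∑ k, e m k * X k i) * e m i := by
            refine Finset.sum_congr rfl fun m _ => ?_
            rw [Finset.sum_mul]
            exact Finset.sum_congr rfl fun k _ => by ring
        _ = X i i := (hcol i i).symm
    have hPsq : ∀ i, ∑ k, (P i k) ^ 2 = P i i := by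
      intro i
      rw [← hPP i]
      exact Finset.sum_congr rfl fun k _ => pow_two _
    have cs := Finset.sum_mul_sq_le_sq_mul_sq Finset.univ
      (fun p : Fin d × Fin d => c p.1 * P p.1 p.2) (fun p : Fin d × Fin d => X p.2 p.1)
    have e1 : ∑ p : Fin d × Fin d, (c p.1 * P p.1 p.2) * X p.2 p.1 = ∑ i, c i * X i i := by
      rw [Fintype.sum_prod_type]
      refine Finset.sum_congr rfl fun i _ => ?_
      rw [← hPX i, Finset.mul_sum]
      exact Finset.sum_congr rfl fun k _ => by ring
    have e2 : ∑ p : Fin d × Fin d, (c p.1 * P p.1 p.2) ^ 2 = ∑ i, (c i) ^ 2 * P i i := by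
      rw [Fintype.sum_prod_type]
      refine Finset.sum_congr rfl fun i _ => ?_
      rw [← hPsq i, Finset.mul_sum]
      exact Finset.sum_congr rfl fun k _ => by ring
    have e3 : ∑ p : Fin d × Fin d, (X p.2 p.1) ^ 2 = ∑ i, ∑ j, (X i j) ^ 2 := by
      rw [Fintype.sum_prod_type]
      exact Finset.sum_comm
    rw [e1, e2, e3] at cs
    exact cs




lemma sum_sel {d r : ℕ} (a t : Fin d → ℝ) (ha0 : ∀ i, 0 ≤ a i)
    (hmono : ∀ i j : Fin d, i ≤ j → a j ≤ a i) (ht0 : ∀ i, 0 ≤ t i) (ht1 : ∀ i, t i ≤ 1)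
    (hts : ∑ i, t i ≤ (r : ℝ)) :
    ∑ i, a i * t i ≤ ∑ i : Fin d, if (i : ℕ) < r then a i else 0 := by
  classical
  by_cases hdr : d ≤ r
  · have hall : ∀ i : Fin d, (i : ℕ) < r := fun i => lt_of_lt_of_le i.isLt hdr
    calc ∑ i, a i * t i ≤ ∑ i, a i :=
          Finset.sum_le_sum fun i _ => mul_le_of_le_one_right (ha0 i) (ht1 i)
      _ = ∑ i : Fin d, if (i : ℕ) < r then a i else 0 :=
          Finset.sum_congr rfl fun i _ => (if_pos (hall i)).symm
  · push_neg at hdr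
    set ρ : Fin d := ⟨r, hdr⟩ with hρ
    set p : Fin d → Prop := fun i => (i : ℕ) < r with hp
    have hcard : (Finset.univ.filter p).card = r := by
      have : Finset.univ.filter p = Finset.Iio ρ := by
        ext i
        simp [hp, Fin.lt_def, hρ]
      rw [this, Fin.card_Iio]
    have hsplit : ∑ i ∈ Finset.univ.filter p, t i + ∑ i ∈ Finset.univ.filter (fun i => ¬ p i), t i
        = ∑ i, t i := Finset.sum_filter_add_sum_filter_not _ _ _
    calc ∑ i, a i * t i
        = ∑ i ∈ Finset.univ.filter p, a i * t i
            + ∑ i ∈ Finset.univ.filter (fun i => ¬ p i), a i * t i :=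
          (Finset.sum_filter_add_sum_filter_not _ _ _).symm
      _ ≤ ∑ i ∈ Finset.univ.filter p, a i * t i
            + ∑ i ∈ Finset.univ.filter (fun i => ¬ p i), a ρ * t i := by
          refine add_le_add_right (Finset.sum_le_sum fun i hi => ?_) _
          rw [Finset.mem_filter] at hi
          have : ρ ≤ i := by
            rw [Fin.le_def]
            exact le_of_not_gt hi.2
          exact mul_le_mul_of_nonneg_right (hmono ρ i this) (ht0 i)
      _ = ∑ i ∈ Finset.univ.filter p, a i * t i
            + a ρ * ∑ i ∈ Finset.univ.filter (fun i => ¬ p i), t i := by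
          rw [Finset.mul_sum]
      _ ≤ ∑ i ∈ Finset.univ.filter p, a i * t i
            + a ρ * ((r : ℝ) - ∑ i ∈ Finset.univ.filter p, t i) := by
          refine add_le_add_right (mul_le_mul_of_nonneg_left ?_ (ha0 ρ)) _
          linarith
      _ = ∑ i ∈ Finset.univ.filter p, (a i * t i + a ρ * (1 - t i)) := by
          rw [Finset.sum_add_distrib]
          congr 1
          rw [← Finset.mul_sum, Finset.sum_sub_distrib, Finset.sum_const, hcard]
          simp
      _ ≤ ∑ i ∈ Finset.univ.filter p, a i := by
          refine Finset.sum_le_sum fun i hi => ?_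
          rw [Finset.mem_filter] at hi
          have hle : i ≤ ρ := by
            rw [Fin.le_def]
            exact le_of_lt hi.2
          have := hmono i ρ hle
          nlinarith [ht0 i, ht1 i]
      _ = ∑ i : Fin d, if (i : ℕ) < r then a i else 0 := by
          rw [Finset.sum_filter]
set_option maxHeartbeats 1600000 in
/-- With `Λ = Q·D·Qᵀ` (Q orthogonal, `D = diag(λ₁ ≥ … ≥ λ_d > 0)`),
fix `1 ≤ r ≤ d` and let `V* = diag(v*)` with `v*_i = N/((N+1)·λ_i + tr(D))` for
`i ≤ r` and `v*_i = 0` for `i > r`. Then for every nonzero `c`, the pair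
`(c·Q·V*·Qᵀ, 1/c)` minimizes `ℓ̃(U,u)` over all `U` with `rank(U) ≤ r` and all
`u ∈ ℝ`. -/
theorem stmt_3 (d N r : ℕ) (hd : 0 < d) (hN : 0 < N) (hr1 : 1 ≤ r) (hrd : r ≤ d)
    (Λ : Matrix (Fin d) (Fin d) ℝ) (hΛpd : Λ.PosDef)
    (Q D : Matrix (Fin d) (Fin d) ℝ) (lam : Fin d → ℝ)
    (hQ : Qᵀ * Q = 1) (hD : D = Matrix.diagonal lam)
    (hlam_pos : ∀ i, 0 < lam i)
    (hlam_sorted : ∀ i j : Fin d, i ≤ j → lam j ≤ lam i)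
    (hΛ : Λ = Q * D * Qᵀ)
    (Γ : Matrix (Fin d) (Fin d) ℝ)
    (hΓ : Γ = (1 + 1 / (N : ℝ)) • Λ +
      (Matrix.trace Λ / (N : ℝ)) • (1 : Matrix (Fin d) (Fin d) ℝ))
    (ℓ : Matrix (Fin d) (Fin d) ℝ → ℝ → ℝ)
    (hℓ : ∀ U u, ℓ U u =
      Matrix.trace ((u ^ 2 / 2) • (Γ * Λ * U * Λ * Uᵀ) - u • (Λ ^ 2 * Uᵀ)))
    (Vstar : Matrix (Fin d) (Fin d) ℝ)
    (hV : Vstar = Matrix.diagonal fun i : Fin d =>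
      if (i : ℕ) < r then (N : ℝ) / (((N : ℝ) + 1) * lam i + Matrix.trace D)
      else 0) :
    ∀ c : ℝ, c ≠ 0 →
      ∀ (U : Matrix (Fin d) (Fin d) ℝ) (u : ℝ), U.rank ≤ r →
        ℓ (c • (Q * Vstar * Qᵀ)) (1 / c) ≤ ℓ U u := by
  intro c hc U u hUrank
  have hN0 : (N : ℝ) ≠ 0 := Nat.cast_ne_zero.mpr hN.ne'
  have hNpos : (0 : ℝ) < N := Nat.cast_pos.mpr hN
  have hsum_pos : 0 < ∑ k, lam k :=
    Finset.sum_pos (fun k _ => hlam_pos k) ⟨⟨0, hd⟩, Finset.mem_univ _⟩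
  set g : Fin d → ℝ := fun i => (1 + 1 / (N : ℝ)) * lam i + (∑ k, lam k) / (N : ℝ)
    with hgdef
  have hg_pos : ∀ i, 0 < g i := by
    intro i
    have h1 : 0 < 1 + 1 / (N : ℝ) := by positivity
    have := hlam_pos i
    have : 0 < (∑ k, lam k) / (N : ℝ) := by positivity
    simp only [hgdef]
    positivity
  have hQQ : Q * Qᵀ = 1 := mul_eq_one_comm.mp hQ
  have cL : ∀ A : Matrix (Fin d) (Fin d) ℝ, Qᵀ * (Q * A) = A := fun A => by
    rw [← Matrix.mul_assoc, hQ, Matrix.one_mul]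
  have cR : ∀ A : Matrix (Fin d) (Fin d) ℝ, Q * (Qᵀ * A) = A := fun A => by
    rw [← Matrix.mul_assoc, hQQ, Matrix.one_mul]
  set G : Matrix (Fin d) (Fin d) ℝ := Matrix.diagonal g with hG
  have htrD : Matrix.trace D = ∑ k, lam k := by rw [hD, Matrix.trace_diagonal]
  have htrΛ : Matrix.trace Λ = ∑ k, lam k := by
    rw [hΛ, Matrix.trace_mul_cycle, hQ, Matrix.one_mul, htrD]
  have hΓQ : Γ = Q * G * Qᵀ := by
    have hGd : G = (1 + 1 / (N : ℝ)) • D + ((∑ k, lam k) / (N : ℝ)) • (1 : Matrix (Fin d) (Fin d) ℝ) := by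
      rw [hG, hD]
      ext i j
      by_cases hij : i = j
      · subst hij
        simp [Matrix.diagonal_apply_eq, Matrix.one_apply_eq, hgdef]
      · simp [Matrix.diagonal_apply_ne _ hij, Matrix.one_apply_ne hij]
    rw [hΓ, htrΛ, hGd, hΛ]
    rw [Matrix.mul_add, Matrix.add_mul, Matrix.mul_smul, Matrix.smul_mul,
      Matrix.mul_smul, Matrix.smul_mul, Matrix.mul_one, hQQ]
  -- the master formula
  have hform : ∀ (M : Matrix (Fin d) (Fin d) ℝ) (v : ℝ),
      ℓ (Q * M * Qᵀ) v
        = v ^ 2 / 2 * (∑ i, ∑ j, g i * lam i * lam j * (M i j) ^ 2)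
          - v * (∑ i, (lam i) ^ 2 * M i i) := by
    intro M v
    rw [hℓ]
    rw [Matrix.trace_sub, Matrix.trace_smul, Matrix.trace_smul, smul_eq_mul, smul_eq_mul]
    have e1 : Γ * Λ * (Q * M * Qᵀ) * Λ * (Q * M * Qᵀ)ᵀ
        = Q * (G * (D * (M * (D * (Mᵀ * Qᵀ))))) := by
      rw [hΓQ, hΛ]
      simp only [Matrix.transpose_mul, Matrix.transpose_transpose]
      simp only [Matrix.mul_assoc, cL, cR]
    have e1t : Matrix.trace (Γ * Λ * (Q * M * Qᵀ) * Λ * (Q * M * Qᵀ)ᵀ)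
        = Matrix.trace (G * (D * (M * (D * Mᵀ)))) := by
      rw [e1, Matrix.trace_mul_comm]
      simp only [Matrix.mul_assoc, hQ, Matrix.mul_one]
    have e2 : Λ ^ 2 * (Q * M * Qᵀ)ᵀ = Q * (D * (D * (Mᵀ * Qᵀ))) := by
      rw [pow_two, hΛ]
      simp only [Matrix.transpose_mul, Matrix.transpose_transpose]
      simp only [Matrix.mul_assoc, cL, cR]
    have e2t : Matrix.trace (Λ ^ 2 * (Q * M * Qᵀ)ᵀ)
        = Matrix.trace (D * (D * Mᵀ)) := by
      rw [e2, Matrix.trace_mul_comm]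
      simp only [Matrix.mul_assoc, hQ, Matrix.mul_one]
    rw [e1t, e2t]
    have s1 : Matrix.trace (G * (D * (M * (D * Mᵀ))))
        = ∑ i, ∑ j, g i * lam i * lam j * (M i j) ^ 2 := by
      rw [hG, hD]
      simp only [Matrix.trace, Matrix.diag_apply, Matrix.mul_apply, Matrix.diagonal_apply,
        Matrix.transpose_apply, ite_mul, zero_mul, Finset.sum_ite_eq, Finset.mem_univ,
        if_true]
      refine Finset.sum_congr rfl fun i _ => ?_
      rw [Finset.mul_sum, Finset.mul_sum]
      refine Finset.sum_congr rfl fun j _ => ?_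
      ring
    have s2 : Matrix.trace (D * (D * Mᵀ)) = ∑ i, (lam i) ^ 2 * M i i := by
      rw [hD]
      simp only [Matrix.trace, Matrix.diag_apply, Matrix.mul_apply, Matrix.diagonal_apply,
        Matrix.transpose_apply, ite_mul, zero_mul, Finset.sum_ite_eq, Finset.mem_univ,
        if_true]
      refine Finset.sum_congr rfl fun i _ => ?_
      ring
    rw [s1, s2]
  set A : ℝ := ∑ i : Fin d, if (i : ℕ) < r then (lam i) ^ 2 / g i else 0 with hA
  have hA0 : 0 ≤ A := by
    rw [hA]
    refine Finset.sum_nonneg fun i _ => ?_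
    split
    · exact div_nonneg (sq_nonneg _) (hg_pos _).le
    · exact le_rfl
  -- value of v* entries
  have hval : ∀ i : Fin d,
      (N : ℝ) / (((N : ℝ) + 1) * lam i + Matrix.trace D) = 1 / g i := by
    intro i
    rw [htrD]
    have hden : 0 < ((N : ℝ) + 1) * lam i + ∑ k, lam k := by
      have := hlam_pos i
      positivity
    rw [div_eq_div_iff hden.ne' (hg_pos i).ne']
    rw [hgdef]
    field_simp
  -- left-hand side value
  have hL : ℓ (c • (Q * Vstar * Qᵀ)) (1 / c) = -A / 2 := by
    have hQVQ : c • (Q * Vstar * Qᵀ) = Q * (c • Vstar) * Qᵀ := by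
      rw [Matrix.mul_smul, Matrix.smul_mul]
    rw [hQVQ, hform]
    have hd1 : ∀ i j : Fin d, (c • Vstar) i j
        = c * (if (i : ℕ) < r ∧ j = i then 1 / g i else 0) := by
      intro i j
      rw [Matrix.smul_apply, smul_eq_mul, hV]
      congr 1
      by_cases hij : j = i
      · subst hij
        rw [Matrix.diagonal_apply_eq]
        by_cases hjr : (j : ℕ) < r
        · rw [if_pos hjr, if_pos ⟨hjr, rfl⟩, hval]
        · rw [if_neg hjr, if_neg (fun h => hjr h.1)]
      · rw [Matrix.diagonal_apply_ne' _ hij, if_neg (fun h => hij h.2)]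
    have hS2V : (∑ i, ∑ j, g i * lam i * lam j * ((c • Vstar) i j) ^ 2) = c ^ 2 * A := by
      rw [hA, Finset.mul_sum]
      refine Finset.sum_congr rfl fun i _ => ?_
      rw [Finset.sum_eq_single i]
      · rw [hd1 i i]
        by_cases hir : (i : ℕ) < r
        · rw [if_pos ⟨hir, rfl⟩, if_pos hir]
          field_simp [(hg_pos i).ne']
        · rw [if_neg (fun h => hir h.1), if_neg hir]
          ring
      · intro j _ hji
        rw [hd1 i j, if_neg (fun h => hji h.2)]
        ring
      · intro h; exact absurd (Finset.mem_univ i) h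
    have hS1V : (∑ i, (lam i) ^ 2 * (c • Vstar) i i) = c * A := by
      rw [hA, Finset.mul_sum]
      refine Finset.sum_congr rfl fun i _ => ?_
      rw [hd1 i i]
      by_cases hir : (i : ℕ) < r
      · rw [if_pos ⟨hir, rfl⟩, if_pos hir]
        field_simp [(hg_pos i).ne']
      · rw [if_neg (fun h => hir h.1), if_neg hir]
        ring
    rw [hS2V, hS1V]
    field_simp
    ring
  rw [hL]
  -- right-hand side lower bound
  set M : Matrix (Fin d) (Fin d) ℝ := Qᵀ * U * Q with hM
  have hUM : U = Q * M * Qᵀ := by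
    rw [hM, ← Matrix.mul_assoc, ← Matrix.mul_assoc, hQQ, Matrix.one_mul,
      Matrix.mul_assoc, hQQ, Matrix.mul_one]
  have hMrank : M.rank ≤ r := by
    calc M.rank ≤ (Qᵀ * U).rank := Matrix.rank_mul_le_left _ _
      _ ≤ U.rank := Matrix.rank_mul_le_right _ _
      _ ≤ r := hUrank
  have hRHS : ℓ U u = u ^ 2 / 2 * (∑ i, ∑ j, g i * lam i * lam j * (M i j) ^ 2)
      - u * (∑ i, (lam i) ^ 2 * M i i) := by
    conv_lhs => rw [hUM]
    exact hform M u
  rw [hRHS]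
  set S2 : ℝ := ∑ i, ∑ j, g i * lam i * lam j * (M i j) ^ 2 with hS2
  set S1 : ℝ := ∑ i, (lam i) ^ 2 * M i i with hS1
  have hS2nn : 0 ≤ S2 := by
    rw [hS2]
    refine Finset.sum_nonneg fun i _ => Finset.sum_nonneg fun j _ => ?_
    have := hg_pos i; have := hlam_pos i; have := hlam_pos j
    positivity
  -- the key inequality S1^2 ≤ A * S2
  have hkey : S1 ^ 2 ≤ A * S2 := by
    set sg : Fin d → ℝ := fun i => Real.sqrt (g i) with hsg
    set sl : Fin d → ℝ := fun i => Real.sqrt (lam i) with hsl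
    set X : Matrix (Fin d) (Fin d) ℝ :=
      Matrix.diagonal (fun i => sg i * sl i) * M * Matrix.diagonal sl with hX
    have hXij : ∀ i j, X i j = (sg i * sl i) * M i j * sl j := by
      intro i j
      rw [hX, Matrix.mul_diagonal, Matrix.diagonal_mul]
    have hXrank : (X.rank : ℝ) ≤ (r : ℝ) := by
      have hh : X.rank ≤ r := by
        calc X.rank ≤ (Matrix.diagonal (fun i => sg i * sl i) * M).rank :=
              Matrix.rank_mul_le_left _ _
          _ ≤ M.rank := Matrix.rank_mul_le_right _ _
          _ ≤ r := hMrank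
      exact_mod_cast hh
    obtain ⟨t, ht0, ht1, htsum, hcs⟩ := proj_bound X
    have hsg_pos : ∀ i, 0 < sg i := fun i => Real.sqrt_pos.2 (hg_pos i)
    have hsg_sq : ∀ i, sg i * sg i = g i := fun i => Real.mul_self_sqrt (hg_pos i).le
    have hsl_sq : ∀ i, sl i * sl i = lam i := fun i => Real.mul_self_sqrt (hlam_pos i).le
    have hcs' := hcs (fun i => lam i / sg i)
    have id1 : ∑ i, (lam i / sg i) * X i i = S1 := by
      rw [hS1]
      refine Finset.sum_congr rfl fun i _ => ?_
      rw [hXij i i]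
      have h2 := (hsg_pos i).ne'
      calc (lam i / sg i) * ((sg i * sl i) * M i i * sl i)
          = (sl i * sl i) * (sg i / sg i) * (lam i * M i i) := by ring
        _ = (lam i) ^ 2 * M i i := by rw [hsl_sq, div_self h2]; ring
    have id2 : ∀ i : Fin d, (lam i / sg i) ^ 2 * t i = (lam i) ^ 2 / g i * t i := by
      intro i
      rw [div_pow, sq (sg i), hsg_sq]
    have id3 : ∑ i, ∑ j, (X i j) ^ 2 = S2 := by
      rw [hS2]
      refine Finset.sum_congr rfl fun i _ => Finset.sum_congr rfl fun j _ => ?_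
      rw [hXij i j]
      calc ((sg i * sl i) * M i j * sl j) ^ 2
          = (sg i * sg i) * ((sl i * sl i) * ((sl j * sl j) * (M i j) ^ 2)) := by ring
        _ = g i * lam i * lam j * (M i j) ^ 2 := by
            rw [hsg_sq, hsl_sq, hsl_sq]; ring
    rw [id1, id3] at hcs'
    have hBA : ∑ i, (lam i / sg i) ^ 2 * t i ≤ A := by
      have heq : ∑ i, (lam i / sg i) ^ 2 * t i = ∑ i, (lam i) ^ 2 / g i * t i :=
        Finset.sum_congr rfl fun i _ => id2 i
      rw [heq, hA]
      refine sum_sel _ _ (fun i => div_nonneg (sq_nonneg _) (hg_pos i).le) ?_ ht0 ht1 ?_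
      · intro i j hij
        have h1 := hlam_sorted i j hij
        have hli := hlam_pos i
        have hlj := hlam_pos j
        rw [div_le_div_iff₀ (hg_pos j) (hg_pos i)]
        simp only [hgdef]
        have hNN : (0:ℝ) ≤ 1 + 1 / (N:ℝ) := by positivity
        have hSS : (0:ℝ) ≤ (∑ k, lam k) / (N:ℝ) := by positivity
        nlinarith [mul_nonneg (mul_nonneg hNN (mul_pos hli hlj).le) (sub_nonneg.2 h1),
          mul_nonneg (mul_nonneg hSS (sub_nonneg.2 h1)) (by linarith : (0:ℝ) ≤ lam i + lam j)]
      · rw [htsum]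
        exact hXrank
    calc S1 ^ 2 ≤ (∑ i, (lam i / sg i) ^ 2 * t i) * S2 := hcs'
      _ ≤ A * S2 := mul_le_mul_of_nonneg_right hBA hS2nn
  -- conclude
  rcases eq_or_lt_of_le hS2nn with h0 | hpos
  · have : S1 ^ 2 ≤ 0 := by rw [← h0] at hkey; simpa using hkey
    have hS10 : S1 = 0 := by nlinarith [sq_nonneg S1]
    rw [hS10, ← h0]
    simp
    linarith
  · nlinarith [sq_nonneg (u * S2 - S1)]
end

section
/- For 1 ≤ r ≤ d, the minimum of ℓ̃(U,u) over all U ∈ ℝ^{d×d} with rank(U) ≤ r and all u ∈ ℝ equals −½·Σ_{i=1}^{r} N·λ_i²/((N+1)·λ_i + tr(D)). -/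
open Matrix

lemma card_filter_lt {d r : ℕ} (hrd : r ≤ d) :
    (Finset.univ.filter (fun i : Fin d => (i : ℕ) < r)).card = r := by
  classical
  have h : Finset.univ.filter (fun i : Fin d => (i : ℕ) < r)
      = Finset.map ⟨Fin.castLE hrd, Fin.castLE_injective hrd⟩ Finset.univ := by
    ext j
    simp only [Finset.mem_filter, Finset.mem_univ, true_and, Finset.mem_map,
      Function.Embedding.coeFn_mk]
    constructor
    · intro hj; exact ⟨⟨(j:ℕ), hj⟩, by ext; simp⟩
    · rintro ⟨i, -, rfl⟩; exact i.isLt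
  rw [h, Finset.card_map, Finset.card_univ, Fintype.card_fin]

lemma weighted_bound {d r : ℕ} (hr1 : 1 ≤ r) (hrd : r ≤ d)
    (w P : Fin d → ℝ) (hw0 : ∀ i, 0 ≤ w i)
    (hmono : ∀ i j : Fin d, i ≤ j → w j ≤ w i)
    (hP0 : ∀ i, 0 ≤ P i) (hP1 : ∀ i, P i ≤ 1)
    (hPsum : ∑ i, P i ≤ (r : ℝ)) :
    ∑ i, w i * P i ≤ ∑ i : Fin d, if (i : ℕ) < r then w i else 0 := by
  classical
  have hrd' : r - 1 < d := by omega
  set ρ : Fin d := ⟨r - 1, hrd'⟩ with hρ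
  have key : ∀ i : Fin d, w i * P i - (if (i : ℕ) < r then w i else 0)
      ≤ w ρ * (P i - (if (i : ℕ) < r then 1 else 0)) := by
    intro i
    by_cases hi : (i : ℕ) < r
    · simp only [hi, if_pos]
      have h1 : i ≤ ρ := by rw [Fin.le_def]; simp [hρ]; omega
      have h2 : w ρ ≤ w i := hmono i ρ h1
      nlinarith [hP1 i, hw0 i]
    · simp only [hi, if_neg, if_false]
      have h1 : ρ ≤ i := by rw [Fin.le_def]; simp [hρ]; omega
      have h2 : w i ≤ w ρ := hmono ρ i h1
      nlinarith [hP0 i]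
  have hsum : ∑ i : Fin d, (w i * P i - (if (i : ℕ) < r then w i else 0))
      ≤ ∑ i : Fin d, w ρ * (P i - (if (i : ℕ) < r then 1 else 0)) :=
    Finset.sum_le_sum (fun i _ => key i)
  rw [Finset.sum_sub_distrib, ← Finset.mul_sum, Finset.sum_sub_distrib] at hsum
  have hones : ∑ i : Fin d, (if (i : ℕ) < r then (1:ℝ) else 0) = r := by
    rw [Finset.sum_ite, Finset.sum_const, Finset.sum_const]
    simp [card_filter_lt hrd]
  rw [hones] at hsum
  nlinarith [hw0 ρ, hPsum, hsum, mul_nonneg (hw0 ρ) (sub_nonneg.mpr hPsum)]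

set_option maxHeartbeats 1000000 in
lemma exists_projection {d r : ℕ} (M : Matrix (Fin d) (Fin d) ℝ)
    (h : M.rank ≤ r) :
    ∃ P : Matrix (Fin d) (Fin d) ℝ,
      (∀ i j, P i j = P j i) ∧
      (∀ i j, ∑ k, P i k * P k j = P i j) ∧
      ((∑ i, P i i) ≤ (r : ℝ)) ∧
      (∀ i j, ∑ k, P i k * M k j = M i j) := by
  classical
  let E := EuclideanSpace ℝ (Fin d)
  let S : Submodule ℝ E := (LinearMap.range M.mulVecLin).map (WithLp.linearEquiv 2 ℝ (Fin d → ℝ)).symm.toLinearMap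
  have hfin : Module.finrank ℝ S = M.rank := LinearEquiv.finrank_map_eq _ _
  let b : OrthonormalBasis (Fin (Module.finrank ℝ S)) ℝ S := stdOrthonormalBasis ℝ S
  set k := Module.finrank ℝ S with hk
  let v : Fin k → E := fun t => (b t : E)
  have hortho : ∀ s t : Fin k, ∑ i, v s i * v t i = if s = t then 1 else 0 := by
    intro s t
    have h1 := b.orthonormal
    rw [orthonormal_iff_ite] at h1
    have h2 := h1 t s
    have h3 : (inner ℝ (b t) (b s) : ℝ) = inner ℝ (v t) (v s) := rfl
    rw [h3, PiLp.inner_apply] at h2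
    simpa [@eq_comm _ t s] using h2
  refine ⟨fun i j => ∑ t, v t i * v t j, ?_, ?_, ?_, ?_⟩
  · intro i j; exact Finset.sum_congr rfl fun t _ => mul_comm _ _
  · intro i j
    show ∑ l, (∑ t, v t i * v t l) * (∑ s, v s l * v s j) = ∑ t, v t i * v t j
    calc ∑ l, (∑ t, v t i * v t l) * (∑ s, v s l * v s j)
        = ∑ l, ∑ t, ∑ s, (v t i * v s j) * (v t l * v s l) := by
          refine Finset.sum_congr rfl fun l _ => ?_
          rw [Finset.sum_mul]
          refine Finset.sum_congr rfl fun t _ => ?_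
          rw [Finset.mul_sum]
          exact Finset.sum_congr rfl fun s _ => by ring
      _ = ∑ t, ∑ s, ∑ l, (v t i * v s j) * (v t l * v s l) := by
          rw [Finset.sum_comm]
          exact Finset.sum_congr rfl fun t _ => Finset.sum_comm
      _ = ∑ t, ∑ s, (v t i * v s j) * (if t = s then 1 else 0) := by
          refine Finset.sum_congr rfl fun t _ => Finset.sum_congr rfl fun s _ => ?_
          rw [← Finset.mul_sum, hortho]
      _ = ∑ t, v t i * v t j := by
          simp [mul_ite, mul_one, mul_zero, Finset.sum_ite_eq]
  · show ∑ i, (∑ t : Fin k, v t i * v t i) ≤ (r:ℝ)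
    have hsum : ∑ i, ∑ t : Fin k, v t i * v t i = (k : ℝ) := by
      rw [Finset.sum_comm]
      have h1 : ∀ t : Fin k, ∑ i, v t i * v t i = 1 := fun t => by simpa using hortho t t
      simp [h1]
    rw [hsum]
    exact_mod_cast hfin.le.trans h
  · intro i j
    show ∑ l, (∑ t, v t i * v t l) * M l j = M i j
    set x : E := WithLp.toLp 2 (fun i => M i j) with hxdef
    have hxS : x ∈ S := by
      refine ⟨M *ᵥ Pi.single j 1, ⟨Pi.single j 1, rfl⟩, ?_⟩
      ext i
      simp [Matrix.mulVec, dotProduct, Pi.single_apply, hxdef]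
    have h2 : ∑ t, b.repr ⟨x, hxS⟩ t • (v t) = x := by
      have h1 := congrArg (Submodule.subtype S) (b.sum_repr ⟨x, hxS⟩)
      simpa using h1
    have h3 : ∀ i, ∑ t, b.repr ⟨x, hxS⟩ t * v t i = x i := by
      intro i
      have h6 : (∑ t, b.repr ⟨x, hxS⟩ t • (v t)) i
          = ∑ t, b.repr ⟨x, hxS⟩ t * v t i := by erw [WithLp.ofLp_sum]; simp; exact Finset.sum_congr rfl fun c _ => rfl
      rw [← h6]
      exact congrArg (fun z : E => z i) h2
    have h4 : ∀ t, b.repr ⟨x, hxS⟩ t = ∑ l, v t l * x l := by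
      intro t
      rw [b.repr_apply_apply]
      have h5 : (inner ℝ (b t) (⟨x, hxS⟩ : S) : ℝ) = inner ℝ (v t) x := rfl
      rw [h5, PiLp.inner_apply]
      simp [RCLike.inner_apply, mul_comm]
    calc ∑ l, (∑ t, v t i * v t l) * x l
        = ∑ l, ∑ t, (v t l * x l) * v t i := by
          refine Finset.sum_congr rfl fun l _ => ?_
          rw [Finset.sum_mul]
          exact Finset.sum_congr rfl fun t _ => by ring
      _ = ∑ t, ∑ l, (v t l * x l) * v t i := Finset.sum_comm
      _ = ∑ t, (∑ l, v t l * x l) * v t i := by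
          exact Finset.sum_congr rfl fun t _ => (Finset.sum_mul _ _ _).symm
      _ = ∑ t, b.repr ⟨x, hxS⟩ t * v t i := by
          exact Finset.sum_congr rfl fun t _ => by rw [h4]
      _ = x i := h3 i

lemma ratio_mono (N s a b : ℝ) (hN : 0 < N) (hs : 0 < s) (ha : 0 < a) (hb : 0 < b)
    (hba : b ≤ a) :
    b^2 / ((1 + 1/N) * b + s/N) ≤ a^2 / ((1 + 1/N) * a + s/N) := by
  have h6 : (0:ℝ) < 1 + 1/N := by positivity
  have h7 : (0:ℝ) < s/N := by positivity
  have h4 : 0 < (1 + 1/N) * a + s/N := by positivity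
  have h5 : 0 < (1 + 1/N) * b + s/N := by positivity
  rw [div_le_div_iff₀ h5 h4]
  nlinarith [mul_nonneg (mul_nonneg h6.le (mul_pos ha hb).le) (sub_nonneg.mpr hba),
    mul_nonneg (mul_nonneg h7.le (sub_nonneg.mpr hba)) (by linarith : (0:ℝ) ≤ a + b)]

set_option maxHeartbeats 1000000 in
/-- For `1 ≤ r ≤ d`, the minimum of `ℓ̃(U,u)` over all
`U ∈ ℝ^{d×d}` with `rank(U) ≤ r` and all `u ∈ ℝ` equals
`−½·Σ_{i=1}^{r} N·λ_i²/((N+1)·λ_i + tr(D))`. -/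
theorem stmt_4 (d N r : ℕ) (hd : 0 < d) (hN : 0 < N) (hr1 : 1 ≤ r) (hrd : r ≤ d)
    (Λ : Matrix (Fin d) (Fin d) ℝ) (hΛpd : Λ.PosDef)
    (Q D : Matrix (Fin d) (Fin d) ℝ) (lam : Fin d → ℝ)
    (hQ : Qᵀ * Q = 1) (hD : D = Matrix.diagonal lam)
    (hlam_pos : ∀ i, 0 < lam i)
    (hlam_sorted : ∀ i j : Fin d, i ≤ j → lam j ≤ lam i)
    (hΛ : Λ = Q * D * Qᵀ)
    (Γ : Matrix (Fin d) (Fin d) ℝ)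
    (hΓ : Γ = (1 + 1 / (N : ℝ)) • Λ +
      (Matrix.trace Λ / (N : ℝ)) • (1 : Matrix (Fin d) (Fin d) ℝ))
    (ℓ : Matrix (Fin d) (Fin d) ℝ → ℝ → ℝ)
    (hℓ : ∀ U u, ℓ U u =
      Matrix.trace ((u ^ 2 / 2) • (Γ * Λ * U * Λ * Uᵀ) - u • (Λ ^ 2 * Uᵀ))) :
    IsLeast {y : ℝ | ∃ (U : Matrix (Fin d) (Fin d) ℝ) (u : ℝ),
        U.rank ≤ r ∧ ℓ U u = y}
      (-(1 / 2) * ∑ i : Fin d,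
        if (i : ℕ) < r then
          (N : ℝ) * lam i ^ 2 / (((N : ℝ) + 1) * lam i + Matrix.trace D)
        else 0) := by
  classical
  have hN' : (N : ℝ) ≠ 0 := Nat.cast_ne_zero.mpr hN.ne'
  have hNpos : (0:ℝ) < N := by exact_mod_cast hN
  have hQQ : Q * Qᵀ = 1 := mul_eq_one_comm.mp hQ
  have hQl : ∀ A : Matrix (Fin d) (Fin d) ℝ, Qᵀ * (Q * A) = A := fun A => by
    rw [← Matrix.mul_assoc, hQ, Matrix.one_mul]
  have htrQ : ∀ Y : Matrix (Fin d) (Fin d) ℝ, (Q * Y * Qᵀ).trace = Y.trace := fun Y => by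
    rw [Matrix.trace_mul_comm, ← Matrix.mul_assoc, hQ, Matrix.one_mul]
  set g : Fin d → ℝ := fun i => (1 + 1/(N:ℝ)) * lam i + (∑ l, lam l)/(N:ℝ) with hg
  have hsumlam : (0:ℝ) < ∑ l, lam l :=
    Finset.sum_pos (fun i _ => hlam_pos i) ⟨⟨0, hd⟩, Finset.mem_univ _⟩
  have hgpos : ∀ i, 0 < g i := by
    intro i
    have h1 : 0 < (1 + 1/(N:ℝ)) := by positivity
    have := hlam_pos i
    have h2 : 0 < (∑ l, lam l)/(N:ℝ) := by positivity
    simp only [hg]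
    nlinarith
  have htrD : Matrix.trace D = ∑ l, lam l := by rw [hD, Matrix.trace_diagonal]
  have htrΛ : Λ.trace = ∑ l, lam l := by rw [hΛ, htrQ, hD, Matrix.trace_diagonal]
  -- the trace formula
  have hform : ∀ (W : Matrix (Fin d) (Fin d) ℝ) (u : ℝ),
      ℓ (Q * W * Qᵀ) u = (u^2/2) * (∑ i, ∑ j, g i * lam i * lam j * (W i j)^2)
        - u * ∑ i, lam i^2 * W i i := by
    have hΓQ : Γ = Q * Matrix.diagonal g * Qᵀ := by
      have hdg : Matrix.diagonal g = (1 + 1/(N:ℝ)) • D + ((∑ l, lam l)/(N:ℝ)) • 1 := by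
        rw [hD]
        ext i j
        rcases eq_or_ne i j with rfl | hij
        · simp [Matrix.diagonal_apply_eq, Matrix.one_apply_eq, hg]
        · simp [Matrix.diagonal_apply_ne _ hij, Matrix.one_apply_ne hij]
      rw [hΓ, htrΛ, hdg, hΛ]
      simp only [Matrix.mul_add, Matrix.add_mul, Matrix.mul_smul, Matrix.smul_mul,
        Matrix.mul_one]
      rw [hQQ]
    intro W u
    rw [hℓ, Matrix.trace_sub, Matrix.trace_smul, Matrix.trace_smul, smul_eq_mul, smul_eq_mul]
    have e1 : Γ * Λ * (Q * W * Qᵀ) * Λ * (Q * W * Qᵀ)ᵀ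
        = Q * (Matrix.diagonal g * D * W * D * Wᵀ) * Qᵀ := by
      rw [hΓQ, hΛ]
      simp only [Matrix.transpose_mul, Matrix.transpose_transpose, Matrix.mul_assoc, hQl]
    have etr : ∀ A : Matrix (Fin d) (Fin d) ℝ, (A * Wᵀ).trace = ∑ i, ∑ j, A i j * W i j := by
      intro A
      simp [Matrix.trace, Matrix.diag, Matrix.mul_apply, Matrix.transpose_apply]
    have e2 : (Matrix.diagonal g * D * W * D * Wᵀ).trace
        = ∑ i, ∑ j, g i * lam i * lam j * (W i j)^2 := by
      rw [etr]
      refine Finset.sum_congr rfl fun i _ => Finset.sum_congr rfl fun j _ => ?_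
      rw [hD, Matrix.diagonal_mul_diagonal]
      rw [Matrix.mul_diagonal, Matrix.diagonal_mul]
      ring
    have e3 : (Λ^2 * (Q * W * Qᵀ)ᵀ).trace = ∑ i, lam i^2 * W i i := by
      have hΛ2 : Λ^2 * (Q * W * Qᵀ)ᵀ = Q * ((D * D) * Wᵀ) * Qᵀ := by
        rw [pow_two, hΛ]
        simp only [Matrix.transpose_mul, Matrix.transpose_transpose, Matrix.mul_assoc, hQl]
      rw [hΛ2, htrQ, etr]
      refine Finset.sum_congr rfl fun i _ => ?_
      rw [hD, Matrix.diagonal_mul_diagonal]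
      simp [Matrix.diagonal_apply, ite_mul, Finset.sum_ite_eq, pow_two]
    rw [e1, htrQ, e2, e3]
  -- relation between the two expressions for the optimal value
  have hceq : ∀ i : Fin d,
      (N : ℝ) * lam i ^ 2 / (((N : ℝ) + 1) * lam i + Matrix.trace D) = lam i^2 / g i := by
    intro i
    have hden : ((N : ℝ) + 1) * lam i + Matrix.trace D > 0 := by
      rw [htrD]; nlinarith [hlam_pos i, hsumlam]
    rw [htrD]
    have hgi := hgpos i
    rw [hg] at hgi ⊢
    field_simp
  set T : ℝ := ∑ i : Fin d, (if (i:ℕ) < r then lam i^2 / g i else 0) with hT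
  have htargetT : (-(1/2) : ℝ) * (∑ i : Fin d,
      if (i : ℕ) < r then
        (N : ℝ) * lam i ^ 2 / (((N : ℝ) + 1) * lam i + Matrix.trace D)
      else 0) = -(1/2) * T := by
    rw [hT]
    congr 1
    refine Finset.sum_congr rfl fun i _ => ?_
    by_cases hi : (i:ℕ) < r
    · rw [if_pos hi, if_pos hi, hceq]
    · rw [if_neg hi, if_neg hi]
  rw [show (-(1 / 2) * ∑ i : Fin d,
      if (i : ℕ) < r then
        (N : ℝ) * lam i ^ 2 / (((N : ℝ) + 1) * lam i + Matrix.trace D)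
      else 0) = -(1/2) * T from htargetT]
  constructor
  · -- membership : the minimizer
    set w : Fin d → ℝ := fun i => if (i:ℕ) < r then 1 / g i else 0 with hw
    refine ⟨Q * Matrix.diagonal w * Qᵀ, 1, ?_, ?_⟩
    · -- rank bound
      have hEF : Matrix.diagonal w
          = (Matrix.of fun i t => if (i:ℕ) = (t:ℕ) then w i else 0 : Matrix (Fin d) (Fin r) ℝ)
            * (Matrix.of fun t j => if (t:ℕ) = (j:ℕ) then 1 else 0 : Matrix (Fin r) (Fin d) ℝ) := by
        ext i j
        rw [Matrix.mul_apply]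
        by_cases hij : i = j
        · subst hij
          by_cases hir : (i:ℕ) < r
          · rw [Finset.sum_eq_single (⟨(i:ℕ), hir⟩ : Fin r)]
            · simp [Matrix.diagonal_apply_eq]
            · intro t _ ht
              have : (i:ℕ) ≠ (t:ℕ) := by
                intro hc; apply ht; ext; simp [← hc]
              simp [this]
            · simp
          · have hwi : w i = 0 := by simp [hw, hir]
            rw [Matrix.diagonal_apply_eq, hwi]
            refine (Finset.sum_eq_zero fun t _ => ?_).symm
            simp [hwi]
        · rw [Matrix.diagonal_apply_ne _ hij]
          refine (Finset.sum_eq_zero fun t _ => ?_).symm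
          by_cases h1 : (i:ℕ) = (t:ℕ)
          · have h2 : (t:ℕ) ≠ (j:ℕ) := by
              intro hc; apply hij; ext; omega
            simp [h2]
          · simp [h1]
      calc (Q * Matrix.diagonal w * Qᵀ).rank
          ≤ (Q * Matrix.diagonal w).rank := Matrix.rank_mul_le_left _ _
        _ ≤ (Matrix.diagonal w).rank := Matrix.rank_mul_le_right _ _
        _ ≤ r := by
            rw [hEF]
            exact le_trans (Matrix.rank_mul_le_left _ _)
              (le_trans (Matrix.rank_le_card_width _) (by simp))
    · -- value at the minimizer
      rw [hform (Matrix.diagonal w) 1]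
      have hin : ∀ i : Fin d, ∑ j, g i * lam i * lam j * (Matrix.diagonal w i j)^2
          = g i * lam i^2 * w i^2 := by
        intro i
        have h9 : ∀ j, g i * lam i * lam j * (Matrix.diagonal w i j)^2
            = if i = j then g i * lam i^2 * w i^2 else 0 := by
          intro j
          rcases eq_or_ne i j with rfl | hij
          · rw [Matrix.diagonal_apply_eq, if_pos rfl]; ring
          · rw [Matrix.diagonal_apply_ne _ hij, if_neg hij]
            ring
        rw [Finset.sum_congr rfl fun j _ => h9 j, Finset.sum_ite_eq]
        simp only [Finset.mem_univ, if_true]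
      rw [Finset.sum_congr rfl fun i _ => hin i]
      simp only [Matrix.diagonal_apply_eq]
      rw [hT, Finset.mul_sum, Finset.mul_sum, Finset.mul_sum, ← Finset.sum_sub_distrib]
      refine Finset.sum_congr rfl fun i _ => ?_
      have hwi : w i = if (i:ℕ) < r then 1 / g i else 0 := rfl
      by_cases hi : (i:ℕ) < r
      · rw [hwi, if_pos hi, if_pos hi]
        have hgi := (hgpos i).ne'
        field_simp
        ring
      · rw [hwi, if_neg hi, if_neg hi]
        ring
  · -- lower bound
    rintro y ⟨U, u, hUrank, rfl⟩
    set V : Matrix (Fin d) (Fin d) ℝ := Qᵀ * U * Q with hV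
    have hUV : Q * V * Qᵀ = U := by
      rw [hV]
      calc Q * (Qᵀ * U * Q) * Qᵀ = (Q * Qᵀ) * U * (Q * Qᵀ) := by
            simp only [Matrix.mul_assoc]
        _ = U := by rw [hQQ]; simp [Matrix.mul_assoc, hQQ]
    have hVrank : V.rank ≤ r := by
      rw [hV]
      exact le_trans (Matrix.rank_mul_le_left _ _)
        (le_trans (Matrix.rank_mul_le_right _ _) hUrank)
    set sg : Fin d → ℝ := fun i => Real.sqrt (g i) with hsg
    set sl : Fin d → ℝ := fun i => Real.sqrt (lam i) with hsl
    have hsg2 : ∀ i, sg i ^ 2 = g i := fun i => Real.sq_sqrt (hgpos i).le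
    have hsl2 : ∀ i, sl i ^ 2 = lam i := fun i => Real.sq_sqrt (hlam_pos i).le
    have hsgpos : ∀ i, 0 < sg i := fun i => Real.sqrt_pos.mpr (hgpos i)
    set M : Matrix (Fin d) (Fin d) ℝ := fun i j => u * (sg i * sl i * V i j * sl j) with hM
    set c : Fin d → ℝ := fun i => lam i / sg i with hc
    have hMrank : M.rank ≤ r := by
      have hMfac : M = Matrix.diagonal (fun i => u * (sg i * sl i)) * V
          * Matrix.diagonal sl := by
        ext i j
        rw [Matrix.mul_diagonal, Matrix.diagonal_mul, hM]
        ring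
      rw [hMfac]
      exact le_trans (Matrix.rank_mul_le_left _ _)
        (le_trans (Matrix.rank_mul_le_right _ _) hVrank)
    obtain ⟨P, hsymm, hidem, htraceP, hfix⟩ := exists_projection M hMrank
    have hPsq : ∀ i, P i i = ∑ k, P i k ^ 2 := by
      intro i
      rw [← hidem i i]
      exact Finset.sum_congr rfl fun k _ => by rw [hsymm k i, pow_two]
    have hPd0 : ∀ i, 0 ≤ P i i := fun i => by
      rw [hPsq i]; positivity
    have hPd1 : ∀ i, P i i ≤ 1 := by
      intro i
      have h1 : P i i ^ 2 ≤ P i i := by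
        conv_rhs => rw [hPsq i]
        exact Finset.single_le_sum (f := fun k => P i k ^ 2) (fun k _ => sq_nonneg _)
          (Finset.mem_univ i)
      nlinarith [hPd0 i]
    set m2 : ℝ := ∑ i, ∑ j, (M i j)^2 with hm2def
    set a2 : ℝ := ∑ i, c i ^2 * P i i with ha2def
    set t : ℝ := ∑ i, c i * M i i with htdef
    have hm2nn : 0 ≤ m2 := by rw [hm2def]; positivity
    have ha2nn : 0 ≤ a2 := by
      rw [ha2def]
      exact Finset.sum_nonneg fun i _ => mul_nonneg (sq_nonneg _) (hPd0 i)
    -- Cauchy-Schwarz: t^2 ≤ a2 * m2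
    have hPcol : ∀ i, ∑ k, P k i ^ 2 = P i i := by
      intro i
      rw [← hidem i i]
      exact Finset.sum_congr rfl fun k _ => by rw [hsymm k i, pow_two]
    have ht : t = ∑ p : Fin d × Fin d, (c p.2 * P p.1 p.2) * M p.1 p.2 := by
      rw [htdef]
      calc ∑ i, c i * M i i
          = ∑ i, ∑ k, (c i * P k i) * M k i := by
            refine Finset.sum_congr rfl fun i _ => ?_
            rw [← hfix i i, Finset.mul_sum]
            exact Finset.sum_congr rfl fun k _ => by rw [hsymm i k]; ring
        _ = ∑ k, ∑ i, (c i * P k i) * M k i := Finset.sum_comm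
        _ = ∑ p : Fin d × Fin d, (c p.2 * P p.1 p.2) * M p.1 p.2 := by
            rw [Fintype.sum_prod_type]
    have hX2 : ∑ p : Fin d × Fin d, (c p.2 * P p.1 p.2)^2 = a2 := by
      rw [Fintype.sum_prod_type, Finset.sum_comm, ha2def]
      refine Finset.sum_congr rfl fun i _ => ?_
      rw [← hPcol i, Finset.mul_sum]
      exact Finset.sum_congr rfl fun k _ => by ring
    have hM2 : ∑ p : Fin d × Fin d, (M p.1 p.2)^2 = m2 := by
      rw [Fintype.sum_prod_type, hm2def]
    have hCS : t^2 ≤ a2 * m2 := by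
      rw [ht, ← hX2, ← hM2]
      exact Finset.sum_mul_sq_le_sq_mul_sq Finset.univ _ _
    -- a2 ≤ T
    have hcsq : ∀ i, c i ^ 2 = lam i ^2 / g i := by
      intro i
      rw [hc, div_pow, hsg2]
    have ha2T : a2 ≤ T := by
      have ha2' : a2 = ∑ i, (lam i^2 / g i) * P i i := by
        rw [ha2def]
        exact Finset.sum_congr rfl fun i _ => by rw [hcsq i]
      rw [ha2', hT]
      have hmono : ∀ i j : Fin d, i ≤ j → lam j^2 / g j ≤ lam i^2 / g i := by
        intro i j hij
        have hgie : g i = (1 + 1/(N:ℝ)) * lam i + (∑ l, lam l)/(N:ℝ) := rfl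
        have hgje : g j = (1 + 1/(N:ℝ)) * lam j + (∑ l, lam l)/(N:ℝ) := rfl
        rw [hgie, hgje]
        exact ratio_mono (N:ℝ) (∑ l, lam l) (lam i) (lam j) hNpos hsumlam
          (hlam_pos i) (hlam_pos j) (hlam_sorted i j hij)
      exact weighted_bound hr1 hrd (fun i => lam i^2 / g i) (fun i => P i i)
        (fun i => div_nonneg (sq_nonneg _) (hgpos i).le)
        hmono hPd0 hPd1 htraceP
    -- value of ℓ
    have hval : ℓ U u = m2/2 - t := by
      rw [← hUV, hform V u]
      have e1 : m2 = u^2 * ∑ i, ∑ j, g i * lam i * lam j * (V i j)^2 := by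
        rw [hm2def, Finset.mul_sum]
        refine Finset.sum_congr rfl fun i _ => ?_
        rw [Finset.mul_sum]
        refine Finset.sum_congr rfl fun j _ => ?_
        have h1 : M i j ^2 = u^2 * (sg i^2 * (sl i^2 * (sl j^2 * V i j^2))) := by
          rw [hM]; ring
        rw [h1, hsg2, hsl2, hsl2]
        ring
      have e2 : t = u * ∑ i, lam i^2 * V i i := by
        rw [htdef, Finset.mul_sum]
        refine Finset.sum_congr rfl fun i _ => ?_
        have hsgi := (hsgpos i).ne'
        have h1 : sl i * sl i = lam i := by rw [← pow_two]; exact hsl2 i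
        have h2 : c i * M i i = u * lam i * (sl i * sl i) * V i i * (sg i / sg i) := by
          rw [hc, hM]; ring
        rw [h2, div_self hsgi, h1, mul_one]
        ring
      rw [e1, e2]
      ring
    rw [hval]
    -- final inequality
    have hTnn : a2 ≤ T := ha2T
    have h4t : 4*t^2 ≤ (m2+a2)^2 := by nlinarith [sq_nonneg (m2 - a2), hCS]
    have h2t : 2*t ≤ m2 + a2 := by nlinarith [h4t, hm2nn, ha2nn]
    linarith
end

section
/- For 1 ≤ r ≤ d, the minimum of ‖D'^{1/2}·D^{1/2}·(V − D'⁻¹)·D^{1/2}‖_F² over all d×d real matrices V with rank(V) ≤ r equals Σ_{i>r} λ_i²/λ'_i, and it is attained at the diagonal matrix V* = diag(v*₁,…,v*_d) with v*_i = 1/λ'_i for i ≤ r and v*_i = 0 for i > r. -/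
open Matrix

lemma stmt5_card_filter_le (d r : ℕ) :
    (Finset.univ.filter fun i : Fin d => r ≤ (i : ℕ)).card = d - r := by
  rw [Finset.card_filter]
  rw [Fin.sum_univ_eq_sum_range (fun i => if r ≤ i then 1 else 0)]
  rw [← Finset.card_filter, Finset.range_eq_Ico, Finset.Ico_filter_le, Nat.card_Ico]
  omega

lemma stmt5_key_ineq {d : ℕ} (r : ℕ) (hrd : r ≤ d) (s t : Fin d → ℝ)
    (hs0 : ∀ i, 0 ≤ s i) (hmono : ∀ i j : Fin d, i ≤ j → s j ≤ s i)
    (ht0 : ∀ i, 0 ≤ t i) (ht1 : ∀ i, t i ≤ 1)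
    (hsum : (d : ℝ) - r ≤ ∑ i, t i) :
    (∑ i : Fin d, if r ≤ (i : ℕ) then s i else 0) ≤ ∑ i, s i * t i := by
  classical
  set A := Finset.univ.filter fun i : Fin d => r ≤ (i : ℕ) with hA
  set B := Finset.univ.filter fun i : Fin d => ¬ r ≤ (i : ℕ) with hB
  set c : ℝ := if h : r < d then s ⟨r, h⟩ else 0 with hc
  have hc0 : 0 ≤ c := by
    rw [hc]; split <;> simp [hs0 _, le_refl]
  have hcA : ∀ i ∈ A, s i ≤ c := by
    intro i hi
    simp only [hA, Finset.mem_filter] at hi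
    have hrd' : r < d := lt_of_le_of_lt hi.2 i.isLt
    rw [hc, dif_pos hrd']
    exact hmono ⟨r, hrd'⟩ i (by simpa [Fin.le_def] using hi.2)
  have hcB : ∀ i ∈ B, c ≤ s i := by
    intro i hi
    simp only [hB, Finset.mem_filter, not_le] at hi
    rw [hc]
    split
    · exact hmono i ⟨r, ‹r < d›⟩ (le_of_lt (by simpa [Fin.lt_def] using hi.2))
    · exact hs0 i
  have hsplit : ∀ f : Fin d → ℝ, ∑ i, f i = ∑ i ∈ A, f i + ∑ i ∈ B, f i := by
    intro f
    rw [hA, hB, Finset.sum_filter_add_sum_filter_not]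
  have hLHS : (∑ i : Fin d, if r ≤ (i : ℕ) then s i else 0) = ∑ i ∈ A, s i := by
    rw [hA, Finset.sum_filter]
  have hcard : (A.card : ℝ) = (d : ℝ) - r := by
    rw [hA, stmt5_card_filter_le]
    push_cast [Nat.cast_sub hrd]
    ring
  have e1 : ∑ i ∈ A, s i * (1 - t i) ≤ ∑ i ∈ A, c * (1 - t i) := by
    apply Finset.sum_le_sum
    intro i hi
    exact mul_le_mul_of_nonneg_right (hcA i hi) (by linarith [ht1 i])
  have e2 : ∑ i ∈ B, c * t i ≤ ∑ i ∈ B, s i * t i := by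
    apply Finset.sum_le_sum
    intro i hi
    exact mul_le_mul_of_nonneg_right (hcB i hi) (ht0 i)
  have e3 : ∑ i ∈ A, c * (1 - t i) ≤ ∑ i ∈ B, c * t i := by
    rw [← Finset.mul_sum, ← Finset.mul_sum]
    apply mul_le_mul_of_nonneg_left _ hc0
    have h1 : ∑ i ∈ A, (1 - t i) = (A.card : ℝ) - ∑ i ∈ A, t i := by
      rw [Finset.sum_sub_distrib, Finset.sum_const, nsmul_eq_mul, mul_one]
    have h2 := hsplit t
    rw [h1, hcard]
    linarith
  have e4 : ∑ i ∈ A, s i * (1 - t i) = ∑ i ∈ A, s i - ∑ i ∈ A, s i * t i := by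
    rw [← Finset.sum_sub_distrib]
    congr 1; ext i; ring
  rw [hLHS, hsplit (fun i => s i * t i)]
  linarith [e1, e2, e3, e4.symm.trans_le (e1.trans (e3.trans e2))]

lemma stmt5_euclid_norm_sq {d : ℕ} (x : EuclideanSpace ℝ (Fin d)) :
    ‖x‖ ^ 2 = ∑ i, x i ^ 2 := by
  rw [EuclideanSpace.norm_eq, Real.sq_sqrt (by positivity)]
  simp [sq_abs]

lemma stmt5_frob_bound {d n : ℕ} (C : Matrix (Fin d) (Fin d) ℝ)
    (v : Fin n → EuclideanSpace ℝ (Fin d)) (hv : Orthonormal ℝ v) :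
    ∑ k : Fin n, ∑ j : Fin d, (∑ i : Fin d, C j i * v k i) ^ 2
      ≤ ∑ j : Fin d, ∑ i : Fin d, (C j i) ^ 2 := by
  rw [Finset.sum_comm]
  apply Finset.sum_le_sum
  intro j _
  set u : EuclideanSpace ℝ (Fin d) := WithLp.toLp 2 (fun i => C j i) with hu
  have h := hv.sum_inner_products_le (𝕜 := ℝ) u (s := Finset.univ)
  rw [stmt5_euclid_norm_sq] at h
  calc ∑ k : Fin n, (∑ i : Fin d, C j i * v k i) ^ 2
      = ∑ k : Fin n, ‖(inner ℝ (v k) u : ℝ)‖ ^ 2 := by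
        apply Finset.sum_congr rfl
        intro k _
        have : (inner ℝ (v k) u : ℝ) = ∑ i : Fin d, C j i * v k i := by
          simp [PiLp.inner_apply, hu, mul_comm]
        rw [this, Real.norm_eq_abs, sq_abs]
    _ ≤ ∑ i, u i ^ 2 := h
    _ = ∑ i, C j i ^ 2 := rfl

lemma stmt5_bessel_coord {d n : ℕ} (v : Fin n → EuclideanSpace ℝ (Fin d))
    (hv : Orthonormal ℝ v) (i : Fin d) :
    ∑ k : Fin n, v k i ^ 2 ≤ 1 := by
  have h := hv.sum_inner_products_le (𝕜 := ℝ) (EuclideanSpace.single i (1:ℝ)) (s := Finset.univ)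
  simpa [EuclideanSpace.inner_single_right, sq_abs] using h

lemma stmt5_exists_onfamily {d r : ℕ} (W : Matrix (Fin d) (Fin d) ℝ)
    (hW : W.rank ≤ r) :
    ∃ (n : ℕ) (v : Fin n → EuclideanSpace ℝ (Fin d)),
      d - r ≤ n ∧ Orthonormal ℝ v ∧ ∀ k, W.mulVec (v k) = 0 := by
  classical
  set e := WithLp.linearEquiv 2 ℝ (Fin d → ℝ)
  set L : EuclideanSpace ℝ (Fin d) →ₗ[ℝ] (Fin d → ℝ) := W.mulVecLin.comp e.toLinearMap with hL
  set K := LinearMap.ker L with hK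
  have hrange : LinearMap.range L = LinearMap.range W.mulVecLin := by
    rw [hL, LinearMap.range_comp, LinearEquiv.range, Submodule.map_top]
  have hrank : Module.finrank ℝ (LinearMap.range L) + Module.finrank ℝ K = d := by
    rw [hK]
    rw [LinearMap.finrank_range_add_finrank_ker L]
    simp [finrank_euclideanSpace]
  have hn : d - r ≤ Module.finrank ℝ K := by
    have : Module.finrank ℝ (LinearMap.range L) ≤ r := by
      rw [hrange]; exact hW
    omega
  set n := Module.finrank ℝ K with hn'
  set b := stdOrthonormalBasis ℝ K
  refine ⟨n, fun k => (b k : EuclideanSpace ℝ (Fin d)), hn, ?_, ?_⟩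
  · rw [orthonormal_iff_ite]
    intro i j
    rw [← Submodule.coe_inner]
    have := b.orthonormal
    rw [orthonormal_iff_ite] at this
    exact this i j
  · intro k
    have hk : L (b k : EuclideanSpace ℝ (Fin d)) = 0 := (b k).2
    exact hk

/-- With `D = diag(λ₁ ≥ … ≥ λ_d > 0)` and
`D' = (1+1/N)·D + (tr(D)/N)·I` (entries `λ'_i`), for `1 ≤ r ≤ d` the minimum of
`‖D'^{1/2}·D^{1/2}·(V − D'⁻¹)·D^{1/2}‖_F²` over all `d×d` real `V` with
`rank(V) ≤ r` equals `Σ_{i>r} λ_i²/λ'_i`, attained at the diagonal matrix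
`V* = diag(v*)` with `v*_i = 1/λ'_i` for `i ≤ r` and `v*_i = 0` for `i > r`. -/
theorem stmt_5 (d N r : ℕ) (hd : 0 < d) (hN : 0 < N) (hr1 : 1 ≤ r) (hrd : r ≤ d)
    (lam : Fin d → ℝ)
    (hlam_pos : ∀ i, 0 < lam i)
    (hlam_sorted : ∀ i j : Fin d, i ≤ j → lam j ≤ lam i)
    (D : Matrix (Fin d) (Fin d) ℝ) (hD : D = Matrix.diagonal lam)
    (lam' : Fin d → ℝ)
    (hlam' : ∀ i, lam' i = (1 + 1 / (N : ℝ)) * lam i + Matrix.trace D / (N : ℝ))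
    (D' : Matrix (Fin d) (Fin d) ℝ) (hD' : D' = Matrix.diagonal lam')
    (F : Matrix (Fin d) (Fin d) ℝ → ℝ)
    (hF : ∀ V, F V = ∑ i : Fin d, ∑ j : Fin d,
      ((Matrix.diagonal (fun k : Fin d => Real.sqrt (lam' k)) *
        Matrix.diagonal (fun k : Fin d => Real.sqrt (lam k)) *
        (V - D'⁻¹) *
        Matrix.diagonal (fun k : Fin d => Real.sqrt (lam k))) i j) ^ 2)
    (Vstar : Matrix (Fin d) (Fin d) ℝ)
    (hV : Vstar = Matrix.diagonal fun i : Fin d =>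
      if (i : ℕ) < r then 1 / lam' i else 0) :
    IsLeast {y : ℝ | ∃ V : Matrix (Fin d) (Fin d) ℝ, V.rank ≤ r ∧ F V = y}
      (∑ i : Fin d, if r ≤ (i : ℕ) then lam i ^ 2 / lam' i else 0) ∧
    Vstar.rank ≤ r ∧
    F Vstar = ∑ i : Fin d, if r ≤ (i : ℕ) then lam i ^ 2 / lam' i else 0 := by
  classical
  have hNpos : 0 < (N : ℝ) := by exact_mod_cast hN
  have htr : Matrix.trace D = ∑ i, lam i := by rw [hD, Matrix.trace_diagonal]
  have htr_pos : 0 < ∑ i, lam i :=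
    Finset.sum_pos (fun i _ => hlam_pos i) (by simp [Finset.univ_nonempty_iff, Fin.pos_iff_nonempty.mp hd])
  have hlam'_pos : ∀ i, 0 < lam' i := by
    intro i
    rw [hlam' i, htr]
    have h1 : 0 < 1 + 1 / (N : ℝ) := by positivity
    exact add_pos (mul_pos h1 (hlam_pos i)) (div_pos htr_pos hNpos)
  set p : Fin d → ℝ := fun i => Real.sqrt (lam' i) * Real.sqrt (lam i) with hp
  set q : Fin d → ℝ := fun i => Real.sqrt (lam i) with hq
  set s : Fin d → ℝ := fun i => lam i ^ 2 / lam' i with hs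
  have hDinv : D'⁻¹ = Matrix.diagonal (fun i => (lam' i)⁻¹) := by
    rw [hD']
    apply Matrix.inv_eq_right_inv
    rw [Matrix.diagonal_mul_diagonal]
    have : (fun i => lam' i * (lam' i)⁻¹) = fun _ : Fin d => (1:ℝ) := by
      ext i; exact mul_inv_cancel₀ (hlam'_pos i).ne'
    rw [this, Matrix.diagonal_one]
  have hentry : ∀ (V : Matrix (Fin d) (Fin d) ℝ) i j,
      ((Matrix.diagonal (fun k : Fin d => Real.sqrt (lam' k)) *
        Matrix.diagonal (fun k : Fin d => Real.sqrt (lam k)) *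
        (V - D'⁻¹) *
        Matrix.diagonal (fun k : Fin d => Real.sqrt (lam k))) i j)
      = p i * (V - D'⁻¹) i j * q j := by
    intro V i j
    rw [Matrix.diagonal_mul_diagonal, Matrix.mul_diagonal, Matrix.diagonal_mul]
  have hFeq : ∀ V, F V = ∑ i : Fin d, ∑ j : Fin d,
      (p i * (V - D'⁻¹) i j * q j) ^ 2 := by
    intro V
    rw [hF V]
    exact Finset.sum_congr rfl fun i _ => Finset.sum_congr rfl fun j _ => by rw [hentry]
  have hpq : ∀ i, p i * (lam' i)⁻¹ * q i = lam i / Real.sqrt (lam' i) := by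
    intro i
    have hss : Real.sqrt (lam' i) * Real.sqrt (lam' i) = lam' i :=
      Real.mul_self_sqrt (hlam'_pos i).le
    have hs2 : Real.sqrt (lam i) * Real.sqrt (lam i) = lam i :=
      Real.mul_self_sqrt (hlam_pos i).le
    have hsp : 0 < Real.sqrt (lam' i) := Real.sqrt_pos.2 (hlam'_pos i)
    show Real.sqrt (lam' i) * Real.sqrt (lam i) * (lam' i)⁻¹ * Real.sqrt (lam i)
      = lam i / Real.sqrt (lam' i)
    rw [eq_div_iff hsp.ne']
    have hre : Real.sqrt (lam' i) * Real.sqrt (lam i) * (lam' i)⁻¹ * Real.sqrt (lam i)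
        * Real.sqrt (lam' i)
        = (Real.sqrt (lam' i) * Real.sqrt (lam' i)) * (Real.sqrt (lam i) * Real.sqrt (lam i))
          * (lam' i)⁻¹ := by ring
    rw [hre, hss, hs2, mul_comm (lam' i) (lam i), mul_assoc,
      mul_inv_cancel₀ (hlam'_pos i).ne', mul_one]
  have hsig : ∀ i, (lam i / Real.sqrt (lam' i)) ^ 2 = s i := by
    intro i
    rw [hs, div_pow, Real.sq_sqrt (hlam'_pos i).le]
  have hs0 : ∀ i, 0 ≤ s i := fun i =>
    div_nonneg (sq_nonneg _) (hlam'_pos i).le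
  have hsmono : ∀ i j : Fin d, i ≤ j → s j ≤ s i := by
    intro i j hij
    have h1 : lam j ≤ lam i := hlam_sorted i j hij
    have h2 : 0 < lam j := hlam_pos j
    have h3 : 0 < lam i := hlam_pos i
    have h4 : 0 < lam' i := hlam'_pos i
    have h5 : 0 < lam' j := hlam'_pos j
    rw [hs, div_le_div_iff₀ h5 h4]
    rw [hlam' i, hlam' j, htr]
    have h6 : 0 < 1 + 1 / (N : ℝ) := by positivity
    have h7 : 0 < (∑ i, lam i) / (N : ℝ) := div_pos htr_pos hNpos
    nlinarith [mul_nonneg (mul_nonneg h6.le (mul_nonneg h3.le h2.le)) (sub_nonneg.2 h1),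
      mul_nonneg h7.le (mul_nonneg (by linarith : (0:ℝ) ≤ lam i + lam j) (sub_nonneg.2 h1))]
  -- computation of F Vstar
  have hFVstar : F Vstar = ∑ i : Fin d, if r ≤ (i : ℕ) then lam i ^ 2 / lam' i else 0 := by
    rw [hFeq, hV, hDinv]
    apply Finset.sum_congr rfl
    intro i _
    rw [Finset.sum_eq_single i]
    · rw [Matrix.sub_apply, Matrix.diagonal_apply_eq, Matrix.diagonal_apply_eq]
      by_cases hir : (i : ℕ) < r
      · rw [if_pos hir, if_neg (by omega)]
        rw [one_div, sub_self]
        ring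
      · rw [if_neg hir, if_pos (by omega)]
        have : p i * (0 - (lam' i)⁻¹) * q i = -(p i * (lam' i)⁻¹ * q i) := by ring
        rw [this, neg_sq, hpq, hsig]
    · intro j _ hji
      rw [Matrix.sub_apply, Matrix.diagonal_apply_ne _ (Ne.symm hji),
        Matrix.diagonal_apply_ne _ (Ne.symm hji)]
      ring
    · intro h
      exact absurd (Finset.mem_univ i) h
  -- rank of Vstar
  have hVrank : Vstar.rank ≤ r := by
    rw [hV, Matrix.rank_diagonal]
    have hinj : Function.Injective
        (fun x : {i : Fin d // (if (i : ℕ) < r then 1 / lam' i else 0) ≠ 0} =>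
          (⟨(x.1 : ℕ), by
            by_contra hc
            exact x.2 (by rw [if_neg (by omega)])⟩ : Fin r)) := by
      intro a b hab
      apply Subtype.ext
      apply Fin.ext
      simpa using congrArg Fin.val hab
    calc Fintype.card {i : Fin d // (if (i : ℕ) < r then 1 / lam' i else 0) ≠ 0}
        ≤ Fintype.card (Fin r) := Fintype.card_le_of_injective _ hinj
      _ = r := Fintype.card_fin r
  refine ⟨⟨⟨Vstar, hVrank, hFVstar⟩, ?_⟩, hVrank, hFVstar⟩
  -- lower bound
  rintro y ⟨V, hVr, rfl⟩
  set W : Matrix (Fin d) (Fin d) ℝ :=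
    Matrix.diagonal p * V * Matrix.diagonal q with hW
  have hWrank : W.rank ≤ r := by
    calc W.rank ≤ (Matrix.diagonal p * V).rank := Matrix.rank_mul_le_left _ _
      _ ≤ V.rank := Matrix.rank_mul_le_right _ _
      _ ≤ r := hVr
  obtain ⟨n, v, hn, hv, hker⟩ := stmt5_exists_onfamily W hWrank
  set t : Fin d → ℝ := fun i => ∑ k : Fin n, v k i ^ 2 with ht
  have ht0 : ∀ i, 0 ≤ t i := fun i => Finset.sum_nonneg fun k _ => sq_nonneg _
  have ht1 : ∀ i, t i ≤ 1 := fun i => stmt5_bessel_coord v hv i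
  have hnormone : ∀ k, ∑ i : Fin d, v k i ^ 2 = 1 := by
    intro k
    rw [← stmt5_euclid_norm_sq, hv.1 k, one_pow]
  have hsum : (d : ℝ) - r ≤ ∑ i, t i := by
    have : ∑ i, t i = (n : ℝ) := by
      rw [ht, Finset.sum_comm]
      simp [hnormone]
    rw [this]
    have h1 : ((d - r : ℕ) : ℝ) ≤ (n : ℝ) := by exact_mod_cast hn
    rw [Nat.cast_sub hrd] at h1
    exact h1
  -- key inequality
  have hkey := stmt5_key_ineq r hrd s t hs0 hsmono ht0 ht1 hsum
  -- the matrix C of entries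
  set C : Matrix (Fin d) (Fin d) ℝ := Matrix.of fun i j => p i * (V - D'⁻¹) i j * q j with hC
  have hCmul : ∀ k j, ∑ i : Fin d, C j i * v k i = -((lam j / Real.sqrt (lam' j)) * v k j) := by
    intro k j
    have hWentry : ∀ a b, W a b = p a * V a b * q b := by
      intro a b
      rw [hW, Matrix.mul_diagonal, Matrix.diagonal_mul]
    have hWzero : ∑ i : Fin d, (p j * V j i * q i) * v k i = 0 := by
      have h : ∑ i, W j i * v k i = 0 := by
        have h0 := congrFun (hker k) j
        simpa [Matrix.mulVec, dotProduct] using h0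
      calc ∑ i : Fin d, (p j * V j i * q i) * v k i
          = ∑ i, W j i * v k i :=
            Finset.sum_congr rfl fun i _ => by rw [hWentry]
        _ = 0 := h
    have hsplit : ∑ i : Fin d, C j i * v k i
        = ∑ i : Fin d, (p j * V j i * q i) * v k i
          - ∑ i : Fin d, (p j * D'⁻¹ j i * q i) * v k i := by
      rw [← Finset.sum_sub_distrib]
      apply Finset.sum_congr rfl
      intro i _
      rw [hC]
      simp only [Matrix.of_apply, Matrix.sub_apply]
      ring
    have hsecond : ∑ i : Fin d, (p j * D'⁻¹ j i * q i) * v k i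
        = (lam j / Real.sqrt (lam' j)) * v k j := by
      rw [hDinv]
      rw [Finset.sum_eq_single j]
      · rw [Matrix.diagonal_apply_eq, hpq]
      · intro i _ hij
        rw [Matrix.diagonal_apply_ne _ (Ne.symm hij)]
        ring
      · intro h; exact absurd (Finset.mem_univ j) h
    rw [hsplit, hWzero, hsecond, zero_sub]
  have hmid : ∑ i, s i * t i = ∑ k : Fin n, ∑ j : Fin d, (∑ i : Fin d, C j i * v k i) ^ 2 := by
    have h1 : ∀ k j, (∑ i : Fin d, C j i * v k i) ^ 2
        = (lam j / Real.sqrt (lam' j)) ^ 2 * v k j ^ 2 := by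
      intro k j
      rw [hCmul k j, neg_sq, mul_pow]
    calc ∑ i, s i * t i
        = ∑ i : Fin d, ∑ k : Fin n, (lam i / Real.sqrt (lam' i)) ^ 2 * v k i ^ 2 := by
          apply Finset.sum_congr rfl
          intro i _
          rw [ht, ← hsig i, Finset.mul_sum]
      _ = ∑ k : Fin n, ∑ j : Fin d, (lam j / Real.sqrt (lam' j)) ^ 2 * v k j ^ 2 :=
          Finset.sum_comm
      _ = ∑ k : Fin n, ∑ j : Fin d, (∑ i : Fin d, C j i * v k i) ^ 2 := by
          apply Finset.sum_congr rfl
          intro k _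
          exact Finset.sum_congr rfl fun j _ => (h1 k j).symm
  have hfrob := stmt5_frob_bound C v hv
  have hFV : F V = ∑ j : Fin d, ∑ i : Fin d, (C j i) ^ 2 := by
    rw [hFeq]
    apply Finset.sum_congr rfl
    intro i _
    apply Finset.sum_congr rfl
    intro j _
    rw [hC]
    rfl
  show (∑ i : Fin d, if r ≤ (i : ℕ) then lam i ^ 2 / lam' i else 0) ≤ F V
  calc (∑ i : Fin d, if r ≤ (i : ℕ) then lam i ^ 2 / lam' i else 0)
      = ∑ i : Fin d, if r ≤ (i : ℕ) then s i else 0 := rfl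
    _ ≤ ∑ i, s i * t i := hkey
    _ = ∑ k : Fin n, ∑ j : Fin d, (∑ i : Fin d, C j i * v k i) ^ 2 := hmid
    _ ≤ ∑ j : Fin d, ∑ i : Fin d, (C j i) ^ 2 := hfrob
    _ = F V := hFV.symm
end
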